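/- arXiv:2001.11828 — 4 statements merged into one kernel-verified Lean document; each statement's English description precedes it below -/
import Mathlib

section
/- For every norm ⦀·⦀ on ℝ^d, the following two statements are equivalent: (i) the sequence of coordinate-k norms is strictly decreasingly graded with respect to the ℓ0 pseudonorm, i.e. it is nonincreasing in k and for every l ∈ {1,…,d} and x ∈ ℝ^d, ℓ0(x) ≤ l if and only if ⦀x⦀_l = ⦀x⦀; (ii) for every k ∈ {0,…,d}, the characteristic function δ_{L_k} of the level set L_k = {x : ℓ0(x) ≤ k} is Capra-convex, i.e. (δ_{L_k})^{¢¢'} = δ_{L_k}. -/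
open scoped BigOperators

noncomputable section

/-- The Euclidean pairing `⟨x,y⟩ = ∑ i, x i * y i` on `Fin d → ℝ`. -/
def dotp {d : ℕ} (x y : Fin d → ℝ) : ℝ := ∑ i, x i * y i

/-- The coordinate subspace `R_K` of vectors vanishing outside `K`. -/
def RK {d : ℕ} (K : Finset (Fin d)) : Set (Fin d → ℝ) := {x | ∀ j ∉ K, x j = 0}

/-- Orthogonal projection onto `R_K`. -/
def projK {d : ℕ} (K : Finset (Fin d)) (x : Fin d → ℝ) : Fin d → ℝ :=
  fun i => if i ∈ K then x i else 0

/-- The ℓ0 pseudonorm: number of nonzero components. -/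
def ell0 {d : ℕ} (x : Fin d → ℝ) : ℕ := (Function.support x).ncard

/-- `N` is a norm on `ℝ^d`. -/
structure IsNorm {d : ℕ} (N : (Fin d → ℝ) → ℝ) : Prop where
  eq_zero_iff : ∀ x, N x = 0 ↔ x = 0
  smul : ∀ (c : ℝ) (x : Fin d → ℝ), N (c • x) = |c| * N x
  triangle : ∀ x y, N (x + y) ≤ N x + N y

/-- `⦀y⦀_{K,★}`: the dual norm (w.r.t. the Euclidean pairing), on the subspace `R_K`,
of the restriction of `N` to `R_K`. -/
def restStar {d : ℕ} (N : (Fin d → ℝ) → ℝ) (K : Finset (Fin d)) (y : Fin d → ℝ) : ℝ :=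
  sSup {r | ∃ x ∈ RK K, N x ≤ 1 ∧ r = dotp x y}

/-- The dual coordinate-k norm `⦀y⦀_{k,★} = sup_{|K| ≤ k} ⦀y_K⦀_{K,★}`. -/
def dualCoord {d : ℕ} (N : (Fin d → ℝ) → ℝ) (k : ℕ) (y : Fin d → ℝ) : ℝ :=
  sSup {r | ∃ K : Finset (Fin d), K.card ≤ k ∧ r = restStar N K (projK K y)}

/-- The coordinate-k norm: the dual norm of the dual coordinate-k norm. -/
def coordNorm {d : ℕ} (N : (Fin d → ℝ) → ℝ) (k : ℕ) (x : Fin d → ℝ) : ℝ :=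
  sSup {r | ∃ y : Fin d → ℝ, dualCoord N k y ≤ 1 ∧ r = dotp x y}

/-- The Capra coupling `¢(x,y) = ⟨x,y⟩/⦀x⦀` (with `¢(0,y) = 0`). -/
def capra {d : ℕ} (N : (Fin d → ℝ) → ℝ) (x y : Fin d → ℝ) : ℝ :=
  if x = 0 then 0 else dotp x y / N x

/-- Capra conjugate `f^¢(y) = sup_x ( ¢(x,y) ∔ (−f(x)) )`.
(EReal addition is the Moreau lower addition: `⊤ + ⊥ = ⊥`.) -/
def capraConj {d : ℕ} (N : (Fin d → ℝ) → ℝ) (f : (Fin d → ℝ) → EReal)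
    (y : Fin d → ℝ) : EReal :=
  ⨆ x : Fin d → ℝ, ((capra N x y : ℝ) : EReal) + (- f x)

/-- Capra biconjugate `f^{¢¢'}(x) = sup_y ( ¢(x,y) ∔ (−f^¢(y)) )`. -/
def capraBiconj {d : ℕ} (N : (Fin d → ℝ) → ℝ) (f : (Fin d → ℝ) → EReal)
    (x : Fin d → ℝ) : EReal :=
  ⨆ y : Fin d → ℝ, ((capra N x y : ℝ) : EReal) + (- capraConj N f y)

/-- Fenchel conjugate `g^★(y) = sup_x ( ⟨x,y⟩ ∔ (−g(x)) )`. -/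
def fenchelConj {d : ℕ} (g : (Fin d → ℝ) → EReal) (y : Fin d → ℝ) : EReal :=
  ⨆ x : Fin d → ℝ, ((dotp x y : ℝ) : EReal) + (- g x)

open Classical in
/-- Characteristic function of a set: `0` on `C`, `+∞` outside. -/
def indic {d : ℕ} (C : Set (Fin d → ℝ)) : (Fin d → ℝ) → EReal :=
  fun x => if x ∈ C then 0 else ⊤

namespace Statement16Aux

variable {d : ℕ} {N : (Fin d → ℝ) → ℝ}

/-! ### dotp basics -/

lemma dotp_zero_right (x : Fin d → ℝ) : dotp x 0 = 0 := by simp [dotp]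

lemma dotp_zero_left (y : Fin d → ℝ) : dotp 0 y = 0 := by simp [dotp]

lemma dotp_smul_right (t : ℝ) (x y : Fin d → ℝ) : dotp x (t • y) = t * dotp x y := by
  simp [dotp, Finset.mul_sum]; ring_nf; apply Finset.sum_congr rfl; intros; ring

lemma dotp_smul_left (t : ℝ) (x y : Fin d → ℝ) : dotp (t • x) y = t * dotp x y := by
  simp [dotp, Finset.mul_sum]; apply Finset.sum_congr rfl; intros; ring

lemma dotp_self_pos {x : Fin d → ℝ} (hx : x ≠ 0) : 0 < dotp x x := by
  have h : ∃ i, x i ≠ 0 := by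
    by_contra h
    push_neg at h
    exact hx (funext h)
  obtain ⟨i, hi⟩ := h
  exact Finset.sum_pos' (fun j _ => mul_self_nonneg (x j))
    ⟨i, Finset.mem_univ i, mul_self_pos.mpr hi⟩

lemma mem_RK_iff {K : Finset (Fin d)} {x : Fin d → ℝ} : x ∈ RK K ↔ ∀ j ∉ K, x j = 0 :=
  Iff.rfl

lemma zero_mem_RK (K : Finset (Fin d)) : (0 : Fin d → ℝ) ∈ RK K := fun _ _ => rfl

lemma smul_mem_RK {K : Finset (Fin d)} {x : Fin d → ℝ} (t : ℝ) (hx : x ∈ RK K) :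
    t • x ∈ RK K := fun j hj => by simp [hx j hj]

lemma neg_mem_RK {K : Finset (Fin d)} {x : Fin d → ℝ} (hx : x ∈ RK K) :
    -x ∈ RK K := fun j hj => by simp [hx j hj]

lemma dotp_projK_right {K : Finset (Fin d)} {x : Fin d → ℝ} (hx : x ∈ RK K)
    (y : Fin d → ℝ) : dotp x (projK K y) = dotp x y := by
  unfold dotp projK
  apply Finset.sum_congr rfl
  intro i _
  by_cases hi : i ∈ K
  · simp [hi]
  · simp [hi, hx i hi]

lemma projK_smul (K : Finset (Fin d)) (t : ℝ) (y : Fin d → ℝ) :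
    projK K (t • y) = t • projK K y := by
  funext i
  by_cases hi : i ∈ K <;> simp [projK, hi]

/-! ### norm basics -/

/-- the standard basis vector as used by `pi_eq_sum_univ` -/
def ee (i : Fin d) : Fin d → ℝ := fun j => if i = j then 1 else 0

variable (hN : IsNorm N)
include hN

lemma N_zero : N 0 = 0 := (hN.eq_zero_iff 0).mpr rfl

lemma N_neg (x : Fin d → ℝ) : N (-x) = N x := by
  have := hN.smul (-1) x
  simpa using this

lemma N_nonneg (x : Fin d → ℝ) : 0 ≤ N x := by
  have h := hN.triangle x (-x)
  rw [add_neg_cancel, N_zero hN, N_neg hN] at h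
  linarith

lemma N_pos {x : Fin d → ℝ} (hx : x ≠ 0) : 0 < N x :=
  lt_of_le_of_ne (N_nonneg hN x) (fun h => hx ((hN.eq_zero_iff x).mp h.symm))

omit hN in
lemma ee_ne_zero (i : Fin d) : ee (d := d) i ≠ 0 := by
  intro h
  have := congrFun h i
  simp [ee] at this

omit hN in
lemma ee_mem_RK (i : Fin d) : ee (d := d) i ∈ RK {i} := by
  intro j hj
  simp only [Finset.mem_singleton] at hj
  exact if_neg (fun h => hj h.symm)

omit hN in
lemma dotp_ee (i : Fin d) (y : Fin d → ℝ) : dotp (ee i) y = y i := by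
  simp [dotp, ee, ite_mul]

lemma N_le_bound (x : Fin d → ℝ) : N x ≤ (∑ i, N (ee i)) * ‖x‖ := by
  have hx : x = ∑ i, x i • ee i := by
    exact pi_eq_sum_univ x
  have hsum : ∀ (s : Finset (Fin d)), N (∑ i ∈ s, x i • ee i) ≤ ∑ i ∈ s, |x i| * N (ee i) := by
    intro s
    induction s using Finset.induction_on with
    | empty => simp [N_zero hN]
    | insert a s hns ih =>
      rw [Finset.sum_insert hns, Finset.sum_insert hns]
      calc N (x a • ee a + ∑ i ∈ s, x i • ee i)
          ≤ N (x a • ee a) + N (∑ i ∈ s, x i • ee i) := hN.triangle _ _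
        _ ≤ |x a| * N (ee a) + ∑ i ∈ s, |x i| * N (ee i) := by
            rw [hN.smul]; linarith [ih]
  calc N x = N (∑ i, x i • ee i) := by rw [← hx]
    _ ≤ ∑ i, |x i| * N (ee i) := hsum Finset.univ
    _ ≤ ∑ i, ‖x‖ * N (ee i) := by
        apply Finset.sum_le_sum
        intro i _
        apply mul_le_mul_of_nonneg_right _ (N_nonneg hN _)
        simpa using norm_le_pi_norm x i
    _ = (∑ i, N (ee i)) * ‖x‖ := by rw [Finset.sum_mul]; apply Finset.sum_congr rfl; intros; ring

lemma N_continuous : Continuous N := by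
  set C := ∑ i, N (ee (d := d) i) with hC
  have key : ∀ x y : Fin d → ℝ, N x - N y ≤ C * ‖x - y‖ := by
    intro x y
    have h1 : N x ≤ N (x - y) + N y := by
      have := hN.triangle (x - y) y
      simpa using this
    have h2 : N (x - y) ≤ C * ‖x - y‖ := N_le_bound hN _
    linarith
  rw [Metric.continuous_iff]
  intro x ε hε
  rcases le_or_gt C 0 with hC0 | hC0
  · refine ⟨1, one_pos, fun y _ => ?_⟩
    have h1 := key y x
    have h2 := key x y
    have hn : (0:ℝ) ≤ ‖y - x‖ := norm_nonneg _
    have hn' : (0:ℝ) ≤ ‖x - y‖ := norm_nonneg _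
    have : N y - N x ≤ 0 := le_trans (key y x) (mul_nonpos_of_nonpos_of_nonneg hC0 hn)
    have : N x - N y ≤ 0 := le_trans (key x y) (mul_nonpos_of_nonpos_of_nonneg hC0 hn')
    rw [Real.dist_eq]
    rw [abs_lt]
    constructor <;> linarith
  · refine ⟨ε / C, div_pos hε hC0, fun y hy => ?_⟩
    rw [Real.dist_eq, abs_lt]
    have hd : ‖y - x‖ < ε / C := by rwa [dist_eq_norm] at hy
    have hd' : ‖x - y‖ < ε / C := by rwa [norm_sub_rev]
    have h1 := key y x
    have h2 := key x y
    have e1 : C * ‖y - x‖ < ε := by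
      rw [mul_comm, ← lt_div_iff₀ hC0]; exact hd
    have e2 : C * ‖x - y‖ < ε := by
      rw [mul_comm, ← lt_div_iff₀ hC0]; exact hd'
    constructor <;> linarith

lemma N_lower : ∃ c : ℝ, 0 < c ∧ ∀ x : Fin d → ℝ, c * ‖x‖ ≤ N x := by
  by_cases hd : ∃ x : Fin d → ℝ, x ≠ 0
  · obtain ⟨x0, hx0⟩ := hd
    have hsn : (Metric.sphere (0 : Fin d → ℝ) 1).Nonempty := by
      refine ⟨‖x0‖⁻¹ • x0, ?_⟩
      have : ‖x0‖ ≠ 0 := norm_ne_zero_iff.mpr hx0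
      simp [norm_smul, abs_of_nonneg (inv_nonneg.mpr (norm_nonneg x0)), inv_mul_cancel₀ this]
    obtain ⟨z, hz, hmin⟩ := (isCompact_sphere (0 : Fin d → ℝ) 1).exists_isMinOn hsn
      (N_continuous hN).continuousOn
    have hz1 : ‖z‖ = 1 := by simpa using hz
    have hzne : z ≠ 0 := by
      intro h; rw [h] at hz1; simp at hz1
    refine ⟨N z, N_pos hN hzne, fun x => ?_⟩
    rcases eq_or_ne x 0 with rfl | hx
    · simp [N_zero hN]
    · have hnx : (0:ℝ) < ‖x‖ := norm_pos_iff.mpr hx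
      have hmem : ‖x‖⁻¹ • x ∈ Metric.sphere (0 : Fin d → ℝ) 1 := by
        simp [norm_smul, abs_of_nonneg (inv_nonneg.mpr (norm_nonneg x)),
          inv_mul_cancel₀ hnx.ne']
      have h1 : N z ≤ N (‖x‖⁻¹ • x) := hmin hmem
      have h2 : N (‖x‖⁻¹ • x) = ‖x‖⁻¹ * N x := by
        rw [hN.smul, abs_of_nonneg (inv_nonneg.mpr (norm_nonneg x))]
      rw [h2] at h1
      calc N z * ‖x‖ ≤ (‖x‖⁻¹ * N x) * ‖x‖ := by
            apply mul_le_mul_of_nonneg_right h1 (norm_nonneg x)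
        _ = N x := by field_simp
  · push_neg at hd
    refine ⟨1, one_pos, fun x => ?_⟩
    rw [hd x]
    simp [N_zero hN]

/-! ### restStar -/

omit hN in
lemma isClosed_RK (K : Finset (Fin d)) : IsClosed (RK K) := by
  have hR : RK (d := d) K = ⋂ (j : Fin d) (_ : j ∉ K), {x : Fin d → ℝ | x j = 0} := by
    ext x
    simp [RK, Set.mem_iInter]
  rw [hR]
  exact isClosed_iInter fun j => isClosed_iInter fun _ =>
    isClosed_eq (continuous_apply j) continuous_const

lemma isCompact_ball (K : Finset (Fin d)) :
    IsCompact {x : Fin d → ℝ | x ∈ RK K ∧ N x ≤ 1} := by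
  obtain ⟨c, hc, hcb⟩ := N_lower hN
  have hsub : {x : Fin d → ℝ | x ∈ RK K ∧ N x ≤ 1} ⊆ Metric.closedBall 0 c⁻¹ := by
    intro x hx
    rw [Metric.mem_closedBall, dist_zero_right]
    have h1 : c * ‖x‖ ≤ 1 := le_trans (hcb x) hx.2
    rw [← le_div_iff₀' hc] at h1
    simpa [one_div] using h1
  have hcl : IsClosed {x : Fin d → ℝ | x ∈ RK K ∧ N x ≤ 1} :=
    (isClosed_RK K).inter ((isClosed_Iic : IsClosed (Set.Iic (1:ℝ))).preimage (N_continuous hN))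
  exact (isCompact_closedBall (0 : Fin d → ℝ) c⁻¹).of_isClosed_subset hcl hsub

lemma restStar_spec (K : Finset (Fin d)) (y : Fin d → ℝ) :
    (∃ x ∈ RK K, N x ≤ 1 ∧ dotp x y = restStar N K y) ∧
      (∀ z ∈ RK K, N z ≤ 1 → dotp z y ≤ restStar N K y) := by
  have hne : ({x : Fin d → ℝ | x ∈ RK K ∧ N x ≤ 1}).Nonempty := by
    refine ⟨0, ?_⟩
    simp only [Set.mem_setOf_eq]
    exact ⟨zero_mem_RK K, by rw [N_zero hN]; norm_num⟩
  have hcont : ContinuousOn (fun x => dotp x y) {x : Fin d → ℝ | x ∈ RK K ∧ N x ≤ 1} := by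
    apply Continuous.continuousOn
    unfold dotp
    exact continuous_finset_sum _ fun i _ => (continuous_apply i).mul continuous_const
  obtain ⟨x0, hx0, hmax⟩ := (isCompact_ball hN K).exists_isMaxOn hne hcont
  have hmem0 : (0:ℝ) ∈ {r | ∃ x ∈ RK K, N x ≤ 1 ∧ r = dotp x y} :=
    ⟨0, zero_mem_RK K, by rw [N_zero hN]; norm_num, (dotp_zero_left y).symm⟩
  have heq : restStar N K y = dotp x0 y := by
    apply le_antisymm
    · apply csSup_le ⟨0, hmem0⟩
      rintro r ⟨z, hz, hz1, rfl⟩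
      exact hmax (⟨hz, hz1⟩ : z ∈ {x : Fin d → ℝ | x ∈ RK K ∧ N x ≤ 1})
    · apply le_csSup
      · refine ⟨dotp x0 y, ?_⟩
        rintro r ⟨z, hz, hz1, rfl⟩
        exact hmax (⟨hz, hz1⟩ : z ∈ {x : Fin d → ℝ | x ∈ RK K ∧ N x ≤ 1})
      · exact ⟨x0, hx0.1, hx0.2, rfl⟩
  exact ⟨⟨x0, hx0.1, hx0.2, heq.symm⟩, fun z hz hz1 => heq ▸
    hmax (⟨hz, hz1⟩ : z ∈ {x : Fin d → ℝ | x ∈ RK K ∧ N x ≤ 1})⟩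

lemma restStar_nonneg (K : Finset (Fin d)) (y : Fin d → ℝ) : 0 ≤ restStar N K y := by
  have := (restStar_spec hN K y).2 0 (zero_mem_RK K) (by rw [N_zero hN]; norm_num)
  rwa [dotp_zero_left] at this

lemma restStar_zero (K : Finset (Fin d)) : restStar N K (0 : Fin d → ℝ) = 0 := by
  obtain ⟨⟨x, _, _, hx⟩, _⟩ := restStar_spec hN K (0 : Fin d → ℝ)
  rw [← hx, dotp_zero_right]

lemma dotp_le_N_mul_restStar {K : Finset (Fin d)} {x : Fin d → ℝ} (hx : x ∈ RK K)
    (y : Fin d → ℝ) : dotp x y ≤ N x * restStar N K y := by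
  rcases eq_or_ne x 0 with rfl | hx0
  · rw [dotp_zero_left, N_zero hN, zero_mul]
  · have hNx : 0 < N x := N_pos hN hx0
    have hz : (N x)⁻¹ • x ∈ RK K := smul_mem_RK _ hx
    have hz1 : N ((N x)⁻¹ • x) ≤ 1 := by
      rw [hN.smul, abs_of_nonneg (inv_nonneg.mpr hNx.le), inv_mul_cancel₀ hNx.ne']
    have := (restStar_spec hN K y).2 _ hz hz1
    rw [dotp_smul_left] at this
    calc dotp x y = N x * ((N x)⁻¹ * dotp x y) := by field_simp
      _ ≤ N x * restStar N K y := mul_le_mul_of_nonneg_left this hNx.le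

lemma restStar_proj (K : Finset (Fin d)) (y : Fin d → ℝ) :
    restStar N K (projK K y) = restStar N K y := by
  obtain ⟨⟨x1, hx1, h11, he1⟩, hub1⟩ := restStar_spec hN K (projK K y)
  obtain ⟨⟨x2, hx2, h21, he2⟩, hub2⟩ := restStar_spec hN K y
  apply le_antisymm
  · rw [← he1, dotp_projK_right hx1]
    exact hub2 _ hx1 h11
  · rw [← he2, ← dotp_projK_right hx2 y]
    exact hub1 _ hx2 h21

lemma restStar_smul (K : Finset (Fin d)) {t : ℝ} (ht : 0 ≤ t) (y : Fin d → ℝ) :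
    restStar N K (t • y) = t * restStar N K y := by
  obtain ⟨⟨x1, hx1, h11, he1⟩, hub1⟩ := restStar_spec hN K (t • y)
  obtain ⟨⟨x2, hx2, h21, he2⟩, hub2⟩ := restStar_spec hN K y
  apply le_antisymm
  · rw [← he1, dotp_smul_right]
    exact mul_le_mul_of_nonneg_left (hub2 _ hx1 h11) ht
  · rw [← he2, ← dotp_smul_right]
    exact hub1 _ hx2 h21

lemma restStar_le_univ (K : Finset (Fin d)) (y : Fin d → ℝ) :
    restStar N K y ≤ restStar N Finset.univ y := by
  obtain ⟨⟨x1, hx1, h11, he1⟩, _⟩ := restStar_spec hN K y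
  rw [← he1]
  exact (restStar_spec hN Finset.univ y).2 _ (fun j hj => absurd (Finset.mem_univ j) hj) h11

lemma restStar_empty (y : Fin d → ℝ) : restStar N (∅ : Finset (Fin d)) y = 0 := by
  obtain ⟨⟨x, hx, _, he⟩, _⟩ := restStar_spec hN (∅ : Finset (Fin d)) y
  have : x = 0 := funext fun j => hx j (Finset.notMem_empty j)
  rw [← he, this, dotp_zero_left]

/-! ### dualCoord -/

omit hN in
lemma DK_eq (k : ℕ) (y : Fin d → ℝ) :
    {r | ∃ K : Finset (Fin d), K.card ≤ k ∧ r = restStar N K (projK K y)}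
      = (fun K : Finset (Fin d) => restStar N K (projK K y)) '' {K | K.card ≤ k} := by
  ext r
  constructor
  · rintro ⟨K, hK, rfl⟩; exact ⟨K, hK, rfl⟩
  · rintro ⟨K, hK, rfl⟩; exact ⟨K, hK, rfl⟩

omit hN in
lemma DK_finite (k : ℕ) (y : Fin d → ℝ) :
    Set.Finite {r | ∃ K : Finset (Fin d), K.card ≤ k ∧ r = restStar N K (projK K y)} := by
  rw [DK_eq]
  exact Set.Finite.image _ (Set.toFinite _)

omit hN in
lemma DK_nonempty (k : ℕ) (y : Fin d → ℝ) :
    Set.Nonempty {r | ∃ K : Finset (Fin d), K.card ≤ k ∧ r = restStar N K (projK K y)} :=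
  ⟨restStar N ∅ (projK ∅ y), ∅, by simp, rfl⟩

omit hN in
lemma le_dualCoord {k : ℕ} {K : Finset (Fin d)} (hK : K.card ≤ k) (y : Fin d → ℝ) :
    restStar N K (projK K y) ≤ dualCoord N k y :=
  le_csSup (DK_finite k y).bddAbove ⟨K, hK, rfl⟩

omit hN in
lemma dualCoord_le {k : ℕ} {y : Fin d → ℝ} {a : ℝ}
    (h : ∀ K : Finset (Fin d), K.card ≤ k → restStar N K (projK K y) ≤ a) :
    dualCoord N k y ≤ a :=
  csSup_le (DK_nonempty k y) (by rintro r ⟨K, hK, rfl⟩; exact h K hK)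

omit hN in
lemma dualCoord_attain (k : ℕ) (y : Fin d → ℝ) :
    ∃ K : Finset (Fin d), K.card ≤ k ∧ dualCoord N k y = restStar N K (projK K y) := by
  have := (DK_nonempty (N := N) k y).csSup_mem (DK_finite k y)
  obtain ⟨K, hK, h⟩ := this
  exact ⟨K, hK, h⟩

lemma dualCoord_nonneg (k : ℕ) (y : Fin d → ℝ) : 0 ≤ dualCoord N k y :=
  le_trans (restStar_nonneg hN ∅ (projK ∅ y)) (le_dualCoord (by simp) y)

lemma dualCoord_zero (k : ℕ) : dualCoord N k (0 : Fin d → ℝ) = 0 := by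
  apply le_antisymm
  · apply dualCoord_le
    intro K _
    have : projK K (0 : Fin d → ℝ) = 0 := by funext i; simp [projK]
    rw [this, restStar_zero hN]
  · exact dualCoord_nonneg hN k 0

lemma dualCoord_zero_k (y : Fin d → ℝ) : dualCoord N 0 y = 0 := by
  apply le_antisymm
  · apply dualCoord_le
    intro K hK
    have : K = ∅ := Finset.card_eq_zero.mp (Nat.le_zero.mp hK)
    subst this
    rw [restStar_empty hN]
  · exact dualCoord_nonneg hN 0 y

lemma dualCoord_smul (k : ℕ) {t : ℝ} (ht : 0 ≤ t) (y : Fin d → ℝ) :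
    dualCoord N k (t • y) = t * dualCoord N k y := by
  apply le_antisymm
  · apply dualCoord_le
    intro K hK
    rw [projK_smul, restStar_smul hN K ht]
    exact mul_le_mul_of_nonneg_left (le_dualCoord hK y) ht
  · obtain ⟨K, hK, hEq⟩ := dualCoord_attain (N := N) k y
    rw [hEq, ← restStar_smul hN K ht, ← projK_smul]
    exact le_dualCoord hK (t • y)

omit hN in
lemma dualCoord_mono {k l : ℕ} (hkl : k ≤ l) (y : Fin d → ℝ) :
    dualCoord N k y ≤ dualCoord N l y := by
  obtain ⟨K, hK, hEq⟩ := dualCoord_attain (N := N) k y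
  rw [hEq]
  exact le_dualCoord (le_trans hK hkl) y

lemma dualCoord_le_univ (k : ℕ) (y : Fin d → ℝ) :
    dualCoord N k y ≤ restStar N Finset.univ y := by
  apply dualCoord_le
  intro K _
  rw [restStar_proj hN]
  exact restStar_le_univ hN K y

lemma dotp_le_N_mul_dualCoord {k : ℕ} {x : Fin d → ℝ} (h : ell0 x ≤ k) (y : Fin d → ℝ) :
    dotp x y ≤ N x * dualCoord N k y := by
  set K : Finset (Fin d) := (Function.support x).toFinite.toFinset with hK
  have hxK : x ∈ RK K := by
    intro j hj
    rw [hK, Set.Finite.mem_toFinset] at hj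
    exact Function.notMem_support.mp hj
  have hcard : K.card ≤ k := by
    rw [hK]
    rw [← Set.ncard_eq_toFinset_card _ (Function.support x).toFinite]
    exact h
  calc dotp x y ≤ N x * restStar N K y := dotp_le_N_mul_restStar hN hxK y
    _ = N x * restStar N K (projK K y) := by rw [restStar_proj hN]
    _ ≤ N x * dualCoord N k y :=
        mul_le_mul_of_nonneg_left (le_dualCoord hcard y) (N_nonneg hN x)

lemma abs_le_N_mul_dualCoord {k : ℕ} (hk : 1 ≤ k) (i : Fin d) (y : Fin d → ℝ) :
    |y i| ≤ N (ee i) * dualCoord N k y := by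
  have hcard : ({i} : Finset (Fin d)).card ≤ k := by simpa using hk
  have h1 : dotp (ee i) y ≤ N (ee i) * dualCoord N k y := by
    calc dotp (ee i) y ≤ N (ee i) * restStar N {i} y := dotp_le_N_mul_restStar hN (ee_mem_RK i) y
      _ = N (ee i) * restStar N {i} (projK {i} y) := by rw [restStar_proj hN]
      _ ≤ N (ee i) * dualCoord N k y :=
          mul_le_mul_of_nonneg_left (le_dualCoord hcard y) (N_nonneg hN _)
  have h2 : dotp (-(ee i)) y ≤ N (ee i) * dualCoord N k y := by
    calc dotp (-(ee i)) y ≤ N (-(ee i)) * restStar N {i} y :=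
          dotp_le_N_mul_restStar hN (neg_mem_RK (ee_mem_RK i)) y
      _ = N (ee i) * restStar N {i} y := by rw [N_neg hN]
      _ = N (ee i) * restStar N {i} (projK {i} y) := by rw [restStar_proj hN]
      _ ≤ N (ee i) * dualCoord N k y :=
          mul_le_mul_of_nonneg_left (le_dualCoord hcard y) (N_nonneg hN _)
  rw [dotp_ee] at h1
  have h3 : dotp (-(ee i)) y = -(y i) := by
    have : dotp (-(ee i)) y = dotp ((-1 : ℝ) • ee i) y := by norm_num
    rw [this, dotp_smul_left, dotp_ee]; ring
  rw [h3] at h2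
  rw [abs_le']
  constructor
  · exact h1
  · linarith

lemma dualCoord_eq_zero_imp {k : ℕ} (hk : 1 ≤ k) {y : Fin d → ℝ}
    (h : dualCoord N k y = 0) : y = 0 := by
  funext i
  have := abs_le_N_mul_dualCoord hN hk i y
  rw [h, mul_zero] at this
  simpa using abs_nonneg (y i) |>.antisymm this |> fun h' => h'.symm

/-! ### coordNorm -/

omit hN in
lemma TK_nonempty (k : ℕ) (x : Fin d → ℝ) (h0 : dualCoord N k (0 : Fin d → ℝ) = 0) :
    Set.Nonempty {r | ∃ y : Fin d → ℝ, dualCoord N k y ≤ 1 ∧ r = dotp x y} :=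
  ⟨0, 0, by rw [h0]; norm_num, (dotp_zero_right x).symm⟩

lemma TK_bddAbove {k : ℕ} (hk : 1 ≤ k) (x : Fin d → ℝ) :
    BddAbove {r | ∃ y : Fin d → ℝ, dualCoord N k y ≤ 1 ∧ r = dotp x y} := by
  refine ⟨∑ i, |x i| * N (ee i), ?_⟩
  rintro r ⟨y, hy, rfl⟩
  calc dotp x y ≤ ∑ i, |x i * y i| := Finset.sum_le_sum fun i _ => le_abs_self _
    _ = ∑ i, |x i| * |y i| := by simp [abs_mul]
    _ ≤ ∑ i, |x i| * N (ee i) := by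
        apply Finset.sum_le_sum
        intro i _
        apply mul_le_mul_of_nonneg_left _ (abs_nonneg (x i))
        calc |y i| ≤ N (ee i) * dualCoord N k y := abs_le_N_mul_dualCoord hN hk i y
          _ ≤ N (ee i) * 1 := mul_le_mul_of_nonneg_left hy (N_nonneg hN _)
          _ = N (ee i) := mul_one _

lemma dotp_le_coordNorm {k : ℕ} (hk : 1 ≤ k) (x : Fin d → ℝ) {y : Fin d → ℝ}
    (hy : dualCoord N k y ≤ 1) : dotp x y ≤ coordNorm N k x :=
  le_csSup (TK_bddAbove hN hk x) ⟨y, hy, rfl⟩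

lemma coordNorm_le {k : ℕ} {x : Fin d → ℝ} {a : ℝ}
    (h : ∀ y : Fin d → ℝ, dualCoord N k y ≤ 1 → dotp x y ≤ a) : coordNorm N k x ≤ a :=
  csSup_le (TK_nonempty k x (dualCoord_zero hN k)) (by rintro r ⟨y, hy, rfl⟩; exact h y hy)

lemma coordNorm_nonneg {k : ℕ} (hk : 1 ≤ k) (x : Fin d → ℝ) : 0 ≤ coordNorm N k x := by
  have := dotp_le_coordNorm hN hk x (y := 0) (by rw [dualCoord_zero hN]; norm_num)
  rwa [dotp_zero_right] at this

lemma coordNorm_le_N {k : ℕ} {x : Fin d → ℝ} (h : ell0 x ≤ k) :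
    coordNorm N k x ≤ N x := by
  apply coordNorm_le hN
  intro y hy
  calc dotp x y ≤ N x * dualCoord N k y := dotp_le_N_mul_dualCoord hN h y
    _ ≤ N x * 1 := mul_le_mul_of_nonneg_left hy (N_nonneg hN x)
    _ = N x := mul_one _

lemma dotp_le_coordNorm_mul {k : ℕ} (hk : 1 ≤ k) (x y : Fin d → ℝ) :
    dotp x y ≤ coordNorm N k x * dualCoord N k y := by
  rcases eq_or_lt_of_le (dualCoord_nonneg hN k y) with h0 | hpos
  · have hy0 : y = 0 := dualCoord_eq_zero_imp hN hk h0.symm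
    subst hy0
    rw [dotp_zero_right, dualCoord_zero hN, mul_zero]
  · set t := dualCoord N k y with ht
    have h1 : dualCoord N k (t⁻¹ • y) ≤ 1 := by
      rw [dualCoord_smul hN k (inv_nonneg.mpr hpos.le), ← ht, inv_mul_cancel₀ hpos.ne']
    have h2 := dotp_le_coordNorm hN hk x h1
    rw [dotp_smul_right] at h2
    calc dotp x y = t * (t⁻¹ * dotp x y) := by field_simp
      _ ≤ t * coordNorm N k x := mul_le_mul_of_nonneg_left h2 hpos.le
      _ = coordNorm N k x * t := mul_comm _ _

lemma N_le_coordNorm {k : ℕ} (hk : 1 ≤ k) (x : Fin d → ℝ) :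
    N x ≤ coordNorm N k x := by
  rcases eq_or_ne x 0 with rfl | hx
  · rw [N_zero hN]; exact coordNorm_nonneg hN hk 0
  · have hNx : 0 < N x := N_pos hN hx
    apply le_of_forall_sub_le
    intro ε hε
    -- separating hyperplane argument
    set t := 1 + ε / N x with htdef
    have ht1 : 1 < t := by
      rw [htdef]
      have : 0 < ε / N x := div_pos hε hNx
      linarith
    have ht0 : 0 < t := lt_trans one_pos ht1
    set p := (t / N x) • x with hpdef
    have hNp : N p = t := by
      rw [hpdef, hN.smul, abs_of_nonneg (div_nonneg ht0.le hNx.le)]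
      field_simp
    have hpB : p ∉ {z : Fin d → ℝ | N z ≤ 1} := by
      simp only [Set.mem_setOf_eq, hNp]
      linarith
    have hconv : Convex ℝ {z : Fin d → ℝ | N z ≤ 1} := by
      intro a ha b hb θ μ hθ hμ hθμ
      simp only [Set.mem_setOf_eq] at ha hb ⊢
      calc N (θ • a + μ • b) ≤ N (θ • a) + N (μ • b) := hN.triangle _ _
        _ = θ * N a + μ * N b := by rw [hN.smul, hN.smul, abs_of_nonneg hθ, abs_of_nonneg hμ]
        _ ≤ θ * 1 + μ * 1 := by
            apply add_le_add
            · exact mul_le_mul_of_nonneg_left ha hθ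
            · exact mul_le_mul_of_nonneg_left hb hμ
        _ = 1 := by rw [mul_one, mul_one, hθμ]
    have hclosed : IsClosed {z : Fin d → ℝ | N z ≤ 1} :=
      (isClosed_Iic : IsClosed (Set.Iic (1:ℝ))).preimage (N_continuous hN)
    obtain ⟨f, u, hfu, hup⟩ := geometric_hahn_banach_closed_point hconv hclosed hpB
    have hu0 : 0 < u := by
      have := hfu 0 (by simp [Set.mem_setOf_eq, N_zero hN])
      simpa using this
    set y : Fin d → ℝ := u⁻¹ • (fun i => f (ee i)) with hydef
    have hdoty : ∀ z : Fin d → ℝ, dotp z y = u⁻¹ * f z := by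
      intro z
      have hz : z = ∑ i, z i • ee i := by exact pi_eq_sum_univ z
      have : f z = ∑ i, z i * f (ee i) := by
        conv_lhs => rw [hz]
        rw [map_sum]
        apply Finset.sum_congr rfl
        intro i _
        rw [ContinuousLinearMap.map_smul]
        simp
      rw [this, dotp]
      rw [Finset.mul_sum]
      apply Finset.sum_congr rfl
      intro i _
      simp [hydef]
      ring
    have hyball : dualCoord N k y ≤ 1 := by
      apply le_trans (dualCoord_le_univ hN k y)
      obtain ⟨⟨z0, hz0, hz01, hz0e⟩, _⟩ := restStar_spec hN Finset.univ y
      rw [← hz0e, hdoty z0]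
      have := hfu z0 (by simpa [Set.mem_setOf_eq] using hz01)
      calc u⁻¹ * f z0 ≤ u⁻¹ * u := mul_le_mul_of_nonneg_left this.le (inv_nonneg.mpr hu0.le)
        _ = 1 := inv_mul_cancel₀ hu0.ne'
    have hfx : N x / t < dotp x y := by
      have hfp : f p = (t / N x) * f x := by
        rw [hpdef, ContinuousLinearMap.map_smul]; simp
      rw [hfp] at hup
      have h1 : u * N x < t * f x := by
        have h2 := mul_lt_mul_of_pos_right hup hNx
        calc u * N x < (t / N x * f x) * N x := h2
          _ = t * f x := by field_simp
      have h3 : N x / t < f x / u := by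
        rw [div_lt_div_iff₀ ht0 hu0]
        linarith
      rw [hdoty x, inv_mul_eq_div]
      exact h3
    have hcn : N x / t ≤ coordNorm N k x :=
      le_trans hfx.le (dotp_le_coordNorm hN hk x hyball)
    -- N x / t = N x / (1 + ε / N x) = N x ^ 2 / (N x + ε) ≥ N x - ε
    have hq : N x / t = N x * N x / (N x + ε) := by
      rw [htdef]
      field_simp
    have : N x - ε ≤ N x / t := by
      rw [hq, le_div_iff₀ (by positivity)]
      nlinarith [sq_nonneg ε]
    linarith

/-! ### capra conjugates -/

omit hN in
lemma ell0_zero : ell0 (0 : Fin d → ℝ) = 0 := by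
  simp [ell0, Function.support_zero]

omit hN in
lemma ell0_le_of_mem_RK {K : Finset (Fin d)} {x : Fin d → ℝ} (hx : x ∈ RK K) :
    ell0 x ≤ K.card := by
  have hsub : Function.support x ⊆ ↑K := by
    intro j hj
    by_contra hjK
    exact hj (hx j (by simpa using hjK))
  calc ell0 x ≤ (↑K : Set (Fin d)).ncard := Set.ncard_le_ncard hsub (K : Set (Fin d)).toFinite
    _ = K.card := Set.ncard_coe_finset K

omit hN in
lemma capra_zero_right (x : Fin d → ℝ) : capra N x 0 = 0 := by
  unfold capra
  split <;> simp [dotp_zero_right]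

lemma capra_le_dualCoord {k : ℕ} {x : Fin d → ℝ} (h : ell0 x ≤ k) (y : Fin d → ℝ) :
    capra N x y ≤ dualCoord N k y := by
  rcases eq_or_ne x 0 with rfl | hx0
  · rw [capra, if_pos rfl]
    exact dualCoord_nonneg hN k y
  · rw [capra, if_neg hx0, div_le_iff₀ (N_pos hN hx0)]
    calc dotp x y ≤ N x * dualCoord N k y := dotp_le_N_mul_dualCoord hN h y
      _ = dualCoord N k y * N x := mul_comm _ _

lemma conj_indic (k : ℕ) :
    capraConj N (indic {x : Fin d → ℝ | ell0 x ≤ k})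
      = fun y => ((dualCoord N k y : ℝ) : EReal) := by
  funext y
  apply le_antisymm
  · apply iSup_le
    intro x
    by_cases hx : ell0 x ≤ k
    · have hmem : x ∈ {z : Fin d → ℝ | ell0 z ≤ k} := hx
      rw [indic, if_pos hmem, neg_zero, add_zero]
      exact_mod_cast EReal.coe_le_coe_iff.mpr (capra_le_dualCoord hN hx y)
    · have hmem : x ∉ {z : Fin d → ℝ | ell0 z ≤ k} := hx
      rw [indic, if_neg hmem]
      rw [EReal.neg_top, EReal.add_bot]
      exact bot_le
  · rcases eq_or_lt_of_le (dualCoord_nonneg hN k y) with h0 | hpos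
    · rw [← h0, EReal.coe_zero]
      refine le_iSup_of_le (0 : Fin d → ℝ) ?_
      have hmem : (0 : Fin d → ℝ) ∈ {z : Fin d → ℝ | ell0 z ≤ k} := by
        simp only [Set.mem_setOf_eq, ell0_zero]
        exact Nat.zero_le k
      rw [indic, if_pos hmem, neg_zero, add_zero, capra, if_pos rfl]
      exact le_refl _
    · obtain ⟨K, hK, hEq⟩ := dualCoord_attain (N := N) k y
      obtain ⟨⟨x0, hx0K, hx01, hx0e⟩, _⟩ := restStar_spec hN K (projK K y)
      have hdot : dotp x0 y = dualCoord N k y := by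
        rw [← dotp_projK_right hx0K y, hx0e, ← hEq]
      have hx0ne : x0 ≠ 0 := by
        intro hz
        rw [hz, dotp_zero_left] at hdot
        exact absurd hdot.symm (ne_of_gt hpos)
      have hx0mem : x0 ∈ {z : Fin d → ℝ | ell0 z ≤ k} :=
        le_trans (ell0_le_of_mem_RK hx0K) hK
      refine le_iSup_of_le x0 ?_
      rw [indic, if_pos hx0mem, neg_zero, add_zero, capra, if_neg hx0ne, hdot]
      apply EReal.coe_le_coe_iff.mpr
      rw [le_div_iff₀ (N_pos hN hx0ne)]
      nlinarith [hpos, hx01, N_pos hN hx0ne]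

lemma biconj_eq (k : ℕ) (x : Fin d → ℝ) :
    capraBiconj N (indic {z : Fin d → ℝ | ell0 z ≤ k}) x
      = ⨆ y : Fin d → ℝ, ((capra N x y - dualCoord N k y : ℝ) : EReal) := by
  unfold capraBiconj
  rw [conj_indic hN k]
  apply iSup_congr
  intro y
  rw [← EReal.coe_neg, ← EReal.coe_add, ← sub_eq_add_neg]

lemma biconj_of_mem {k : ℕ} {x : Fin d → ℝ} (h : ell0 x ≤ k) :
    capraBiconj N (indic {z : Fin d → ℝ | ell0 z ≤ k}) x = 0 := by
  rw [biconj_eq hN]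
  apply le_antisymm
  · apply iSup_le
    intro y
    have h1 : capra N x y - dualCoord N k y ≤ 0 :=
      sub_nonpos.mpr (capra_le_dualCoord hN h y)
    calc ((capra N x y - dualCoord N k y : ℝ) : EReal) ≤ ((0:ℝ) : EReal) :=
          EReal.coe_le_coe_iff.mpr h1
      _ = 0 := EReal.coe_zero
  · refine le_iSup_of_le (0 : Fin d → ℝ) ?_
    rw [capra_zero_right, dualCoord_zero hN, sub_zero, EReal.coe_zero]

lemma biconj_top {k : ℕ} {x : Fin d → ℝ} (hx : x ≠ 0)
    (hex : ∃ y : Fin d → ℝ, dualCoord N k y ≤ 1 ∧ N x < dotp x y) :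
    capraBiconj N (indic {z : Fin d → ℝ | ell0 z ≤ k}) x = ⊤ := by
  rw [biconj_eq hN, EReal.eq_top_iff_forall_lt]
  intro M
  obtain ⟨y, hy1, hy2⟩ := hex
  have hNx : 0 < N x := N_pos hN hx
  set a : ℝ := dotp x y / N x - dualCoord N k y with ha
  have hagt : 0 < a := by
    rw [ha]
    have : 1 < dotp x y / N x := (one_lt_div hNx).mpr hy2
    linarith
  set t : ℝ := (|M| + 1) / a with htd
  have ht0 : 0 < t := by positivity
  have hterm : capra N x (t • y) - dualCoord N k (t • y) = |M| + 1 := by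
    rw [capra, if_neg hx, dotp_smul_right, dualCoord_smul hN k ht0.le]
    have : t * dotp x y / N x - t * dualCoord N k y = t * a := by
      rw [ha]; ring
    rw [this, htd]
    field_simp
  refine lt_of_lt_of_le ?_ (le_iSup _ (t • y))
  rw [hterm]
  apply EReal.coe_lt_coe_iff.mpr
  have := le_abs_self M
  linarith

end Statement16Aux


open Statement16Aux in
theorem statement16 {d : ℕ} (N : (Fin d → ℝ) → ℝ) (hN : IsNorm N) :
    ((∀ (x : Fin d → ℝ) (k l : ℕ), 1 ≤ k → k ≤ l → l ≤ d →
          coordNorm N l x ≤ coordNorm N k x) ∧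
        ∀ l : ℕ, 1 ≤ l → l ≤ d →
          ∀ x : Fin d → ℝ, (ell0 x ≤ l ↔ coordNorm N l x = N x))
      ↔ ∀ k : ℕ, k ≤ d →
          capraBiconj N (indic {x : Fin d → ℝ | ell0 x ≤ k})
            = indic {x : Fin d → ℝ | ell0 x ≤ k} := by
  constructor
  · rintro ⟨hmono, hiff⟩ k hkd
    funext x
    by_cases hx : ell0 x ≤ k
    · rw [biconj_of_mem hN hx]
      have hmem : x ∈ {z : Fin d → ℝ | ell0 z ≤ k} := hx
      rw [indic, if_pos hmem]
    · have hx0 : x ≠ 0 := by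
        intro hz
        exact hx (by rw [hz, ell0_zero]; exact Nat.zero_le k)
      have hex : ∃ y : Fin d → ℝ, dualCoord N k y ≤ 1 ∧ N x < dotp x y := by
        rcases Nat.eq_zero_or_pos k with rfl | hk
        · refine ⟨((N x + 1) / dotp x x) • x, ?_, ?_⟩
          · rw [dualCoord_zero_k hN]; norm_num
          · rw [dotp_smul_right, div_mul_cancel₀ _ (ne_of_gt (dotp_self_pos hx0))]
            linarith
        · have hne : coordNorm N k x ≠ N x := fun he => hx ((hiff k hk hkd x).mpr he)
          have hlt : N x < coordNorm N k x :=
            lt_of_le_of_ne (N_le_coordNorm hN hk x) (Ne.symm hne)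
          obtain ⟨r, hrmem, hr⟩ :=
            exists_lt_of_lt_csSup (TK_nonempty k x (dualCoord_zero hN k)) hlt
          obtain ⟨y, hy, rfl⟩ := hrmem
          exact ⟨y, hy, hr⟩
      rw [biconj_top hN hx0 hex]
      have hmem : x ∉ {z : Fin d → ℝ | ell0 z ≤ k} := hx
      rw [indic, if_neg hmem]
  · intro h
    constructor
    · intro x k l hk hkl _
      apply coordNorm_le hN
      intro y hy
      exact dotp_le_coordNorm hN hk x (le_trans (dualCoord_mono hkl y) hy)
    · intro l hl hld x
      constructor
      · intro h0
        exact le_antisymm (coordNorm_le_N hN h0) (N_le_coordNorm hN hl x)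
      · intro hcn
        by_contra h0
        have hbic := congrFun (h l hld) x
        have hx0 : x ≠ 0 := by
          intro hz
          exact h0 (by rw [hz, ell0_zero]; exact Nat.zero_le l)
        rw [biconj_eq hN] at hbic
        have hRHS : indic {z : Fin d → ℝ | ell0 z ≤ l} x = ⊤ := by
          have hmem : x ∉ {z : Fin d → ℝ | ell0 z ≤ l} := h0
          rw [indic, if_neg hmem]
        rw [hRHS] at hbic
        have hle : (⨆ y : Fin d → ℝ, ((capra N x y - dualCoord N l y : ℝ) : EReal))
            ≤ (0 : EReal) := by
          apply iSup_le
          intro y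
          have hreal : capra N x y - dualCoord N l y ≤ 0 := by
            rw [capra, if_neg hx0, sub_nonpos, div_le_iff₀ (N_pos hN hx0)]
            calc dotp x y ≤ coordNorm N l x * dualCoord N l y :=
                  dotp_le_coordNorm_mul hN hl x y
              _ = dualCoord N l y * N x := by rw [hcn]; ring
          calc ((capra N x y - dualCoord N l y : ℝ) : EReal) ≤ ((0:ℝ) : EReal) :=
                EReal.coe_le_coe_iff.mpr hreal
            _ = 0 := EReal.coe_zero
        rw [hbic] at hle
        exact absurd hle (by simp)
end
end

section
/- For every norm ⦀·⦀ on ℝ^d and every function φ : {0,…,d} → ℝ̄, the Capra subdifferential of φ∘ℓ0 at 0 is ∂_¢(φ∘ℓ0)(0) = ⋂_{l=1}^{d} ( φ(l) ∔̇ (−φ(0)) ) · B_{l,★}, where ∔̇ is the Moreau upper addition and B_{l,★} = {y : ⦀y⦀_{l,★} ≤ 1} is the unit ball of the dual coordinate-l norm, with the conventions λ·B_{l,★} = ∅ for λ ∈ [−∞,0) and (+∞)·B_{l,★} = ℝ^d. -/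
open scoped BigOperators

noncomputable section

/-- Moreau upper addition on `ℝ̄`: extends `+` with `(+∞) ∔̇ (−∞) = +∞`. -/
def uadd (a b : EReal) : EReal := -((-a) + (-b))

/-- `lam • B_{l,★}`, the scaling of the unit ball of the dual coordinate-l norm by
`lam ∈ ℝ̄`, with the conventions `lam • B = ∅` for `lam < 0` and `(+∞) • B = ℝ^d`. -/
def scaledDualBall {d : ℕ} (N : (Fin d → ℝ) → ℝ) (l : ℕ) (lam : EReal) :
    Set (Fin d → ℝ) :=
  if lam = ⊤ then Set.univ
  else if lam < 0 then ∅
  else {y | ((dualCoord N l y : ℝ) : EReal) ≤ lam}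

namespace St17
variable {d : ℕ} {N : (Fin d → ℝ) → ℝ}

lemma N_zero (hN : IsNorm N) : N 0 = 0 := (hN.eq_zero_iff 0).2 rfl

lemma N_neg (hN : IsNorm N) (x : Fin d → ℝ) : N (-x) = N x := by
  simpa using hN.smul (-1) x

lemma N_nonneg (hN : IsNorm N) (x : Fin d → ℝ) : 0 ≤ N x := by
  have h1 : N (x + (-x)) ≤ N x + N (-x) := hN.triangle _ _
  have h2 : N (-x) = N x := N_neg hN x
  have h3 : N (x + (-x)) = 0 := by
    rw [add_neg_cancel]; exact N_zero hN
  linarith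

lemma N_pos (hN : IsNorm N) {x : Fin d → ℝ} (hx : x ≠ 0) : 0 < N x := by
  rcases lt_or_eq_of_le (N_nonneg hN x) with h | h
  · exact h
  · exact absurd ((hN.eq_zero_iff x).1 h.symm) hx

lemma N_upper (hN : IsNorm N) : ∃ M : ℝ, 0 ≤ M ∧ ∀ x, N x ≤ M * ‖x‖ := by
  classical
  refine ⟨∑ i, N (fun j => if i = j then 1 else 0), Finset.sum_nonneg fun i _ => N_nonneg hN _,
    fun x => ?_⟩
  calc N x = N (∑ i, x i • fun j => if i = j then (1:ℝ) else 0) := by rw [← pi_eq_sum_univ]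
    _ ≤ ∑ i, N (x i • fun j => if i = j then (1:ℝ) else 0) :=
        Finset.le_sum_of_subadditive N (N_zero hN).le hN.triangle _ _
    _ = ∑ i, |x i| * N (fun j => if i = j then (1:ℝ) else 0) := by
        refine Finset.sum_congr rfl fun i _ => ?_; rw [hN.smul]
    _ ≤ ∑ i, ‖x‖ * N (fun j => if i = j then (1:ℝ) else 0) := by
        refine Finset.sum_le_sum fun i _ => mul_le_mul_of_nonneg_right ?_ (N_nonneg hN _)
        simpa using norm_le_pi_norm x i
    _ = (∑ i, N (fun j => if i = j then (1:ℝ) else 0)) * ‖x‖ := by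
        rw [Finset.sum_mul]; exact Finset.sum_congr rfl fun i _ => mul_comm _ _

lemma N_cont (hN : IsNorm N) : Continuous N := by
  obtain ⟨M, hM0, hM⟩ := N_upper hN
  refine (LipschitzWith.of_dist_le_mul (K := ⟨M, hM0⟩) (f := N) ?_).continuous
  intro x y
  rw [Real.dist_eq, dist_eq_norm]
  have h1 : N x - N y ≤ N (x - y) := by
    have := hN.triangle (x - y) y; simp only [sub_add_cancel] at this; linarith
  have h2 : N y - N x ≤ N (x - y) := by
    have := hN.triangle (y - x) x; simp only [sub_add_cancel] at this
    have hne : N (y - x) = N (x - y) := by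
      rw [show y - x = -(x - y) by ring, N_neg hN]
    linarith
  calc |N x - N y| ≤ N (x - y) := abs_le.2 ⟨by linarith, h1⟩
    _ ≤ M * ‖x - y‖ := hM _

lemma N_ge (hN : IsNorm N) : ∃ c : ℝ, 0 < c ∧ ∀ x, c * ‖x‖ ≤ N x := by
  by_cases hd : ∀ x : Fin d → ℝ, x = 0
  · exact ⟨1, one_pos, fun x => by rw [hd x]; simp [N_zero hN]⟩
  push_neg at hd; obtain ⟨x₀, hx₀⟩ := hd
  have hnx₀ : ‖x₀‖ ≠ 0 := norm_ne_zero_iff.2 hx₀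
  have hsph : (Metric.sphere (0 : Fin d → ℝ) 1).Nonempty := by
    refine ⟨‖x₀‖⁻¹ • x₀, ?_⟩
    simp [norm_smul, abs_of_nonneg (inv_nonneg.2 (norm_nonneg x₀)), inv_mul_cancel₀ hnx₀]
  obtain ⟨z, hz, hmin⟩ := (isCompact_sphere (0 : Fin d → ℝ) 1).exists_isMinOn hsph
    (N_cont hN).continuousOn
  have hz1 : ‖z‖ = 1 := by simpa using hz
  have hzpos : 0 < N z := N_pos hN (by intro h; rw [h] at hz1; simp at hz1)
  refine ⟨N z, hzpos, fun x => ?_⟩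
  by_cases hx : x = 0
  · simp [hx, N_zero hN]
  · have hnx : 0 < ‖x‖ := norm_pos_iff.2 hx
    have hmem : ‖x‖⁻¹ • x ∈ Metric.sphere (0 : Fin d → ℝ) 1 := by
      simp [norm_smul, abs_of_nonneg (inv_nonneg.2 (norm_nonneg x)), inv_mul_cancel₀ hnx.ne']
    have h1 : N z ≤ N (‖x‖⁻¹ • x) := hmin hmem
    rw [hN.smul, abs_of_nonneg (inv_nonneg.2 (norm_nonneg x))] at h1
    have h2 : N z * ‖x‖ ≤ (‖x‖⁻¹ * N x) * ‖x‖ := mul_le_mul_of_nonneg_right h1 hnx.le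
    calc N z * ‖x‖ ≤ (‖x‖⁻¹ * N x) * ‖x‖ := h2
      _ = N x := by field_simp

end St17

namespace St17
variable {d : ℕ} {N : (Fin d → ℝ) → ℝ}

lemma dotp_smul (c : ℝ) (x y : Fin d → ℝ) : dotp (c • x) y = c * dotp x y := by
  simp [dotp, Finset.mul_sum, mul_assoc]

lemma dotp_zero (y : Fin d → ℝ) : dotp 0 y = 0 := by simp [dotp]

lemma dotp_neg (x y : Fin d → ℝ) : dotp (-x) y = -dotp x y := by
  simp [dotp]

lemma dotp_proj {K : Finset (Fin d)} {x : Fin d → ℝ} (hx : x ∈ RK K) (y : Fin d → ℝ) :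
    dotp x (projK K y) = dotp x y := by
  refine Finset.sum_congr rfl fun i _ => ?_
  by_cases h : i ∈ K
  · simp [projK, h]
  · simp [projK, h, hx i h]

lemma dotp_le (x z : Fin d → ℝ) : dotp x z ≤ ‖x‖ * ∑ i, |z i| := by
  calc dotp x z ≤ ∑ i, |x i * z i| := Finset.sum_le_sum fun i _ => le_abs_self _
    _ ≤ ∑ i, ‖x‖ * |z i| := by
        refine Finset.sum_le_sum fun i _ => ?_
        rw [abs_mul]
        exact mul_le_mul_of_nonneg_right (by simpa using norm_le_pi_norm x i) (abs_nonneg _)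
    _ = ‖x‖ * ∑ i, |z i| := by rw [Finset.mul_sum]

lemma restStar_set_nonempty (hN : IsNorm N) (K : Finset (Fin d)) (z : Fin d → ℝ) :
    (0:ℝ) ∈ {r | ∃ x ∈ RK K, N x ≤ 1 ∧ r = dotp x z} :=
  ⟨0, fun j _ => rfl, by rw [N_zero hN]; norm_num, (dotp_zero z).symm⟩

lemma restStar_bdd (hN : IsNorm N) {c : ℝ} (hc : 0 < c) (hcl : ∀ x, c * ‖x‖ ≤ N x)
    (K : Finset (Fin d)) (z : Fin d → ℝ) :
    (1/c) * ∑ i, |z i| ∈ upperBounds {r | ∃ x ∈ RK K, N x ≤ 1 ∧ r = dotp x z} := by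
  rintro r ⟨x, hx, hx1, rfl⟩
  have h1 : ‖x‖ ≤ 1/c := by
    rw [le_div_iff₀ hc, mul_comm]
    exact (hcl x).trans hx1
  calc dotp x z ≤ ‖x‖ * ∑ i, |z i| := dotp_le x z
    _ ≤ (1/c) * ∑ i, |z i| :=
        mul_le_mul_of_nonneg_right h1 (Finset.sum_nonneg fun i _ => abs_nonneg _)

lemma restStar_nonneg (hN : IsNorm N) {c : ℝ} (hc : 0 < c) (hcl : ∀ x, c * ‖x‖ ≤ N x)
    (K : Finset (Fin d)) (z : Fin d → ℝ) : 0 ≤ restStar N K z :=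
  le_csSup ⟨_, restStar_bdd hN hc hcl K z⟩ (restStar_set_nonempty hN K z)

lemma restStar_le (hN : IsNorm N) (K : Finset (Fin d)) (z : Fin d → ℝ) {b : ℝ}
    (hb : ∀ x ∈ RK K, N x ≤ 1 → dotp x z ≤ b) : restStar N K z ≤ b := by
  refine csSup_le ⟨0, restStar_set_nonempty hN K z⟩ ?_
  rintro r ⟨x, hx, hx1, rfl⟩
  exact hb x hx hx1

lemma le_restStar (hN : IsNorm N) {c : ℝ} (hc : 0 < c) (hcl : ∀ x, c * ‖x‖ ≤ N x)
    {K : Finset (Fin d)} {z x : Fin d → ℝ} (hx : x ∈ RK K) (hx1 : N x ≤ 1) :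
    dotp x z ≤ restStar N K z :=
  le_csSup ⟨_, restStar_bdd hN hc hcl K z⟩ ⟨x, hx, hx1, rfl⟩

lemma abs_proj_le (K : Finset (Fin d)) (y : Fin d → ℝ) (i : Fin d) :
    |projK K y i| ≤ |y i| := by
  by_cases h : i ∈ K <;> simp [projK, h]

lemma dualCoord_bdd (hN : IsNorm N) {c : ℝ} (hc : 0 < c) (hcl : ∀ x, c * ‖x‖ ≤ N x)
    (k : ℕ) (y : Fin d → ℝ) :
    (1/c) * ∑ i, |y i| ∈
      upperBounds {r | ∃ K : Finset (Fin d), K.card ≤ k ∧ r = restStar N K (projK K y)} := by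
  rintro r ⟨K, hK, rfl⟩
  refine restStar_le hN K _ ?_
  intro x hx hx1
  refine le_trans (restStar_bdd hN hc hcl K (projK K y) ⟨x, hx, hx1, rfl⟩) ?_
  refine mul_le_mul_of_nonneg_left (Finset.sum_le_sum fun i _ => abs_proj_le K y i) ?_
  positivity

lemma dualCoord_set_nonempty (y : Fin d → ℝ) (k : ℕ) :
    restStar N ∅ (projK ∅ y) ∈
      {r | ∃ K : Finset (Fin d), K.card ≤ k ∧ r = restStar N K (projK K y)} :=
  ⟨∅, by simp, rfl⟩

lemma le_dualCoord (hN : IsNorm N) {c : ℝ} (hc : 0 < c) (hcl : ∀ x, c * ‖x‖ ≤ N x)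
    {k : ℕ} {K : Finset (Fin d)} (hK : K.card ≤ k) (y : Fin d → ℝ) :
    restStar N K (projK K y) ≤ dualCoord N k y :=
  le_csSup ⟨_, dualCoord_bdd hN hc hcl k y⟩ ⟨K, hK, rfl⟩

lemma dualCoord_le {k : ℕ} {y : Fin d → ℝ} {b : ℝ}
    (hb : ∀ K : Finset (Fin d), K.card ≤ k → restStar N K (projK K y) ≤ b) :
    dualCoord N k y ≤ b := by
  refine csSup_le ⟨_, dualCoord_set_nonempty y k⟩ ?_
  rintro r ⟨K, hK, rfl⟩
  exact hb K hK

end St17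

namespace St17
variable {d : ℕ} {N : (Fin d → ℝ) → ℝ}

lemma ell0_filter (x : Fin d → ℝ) :
    ell0 x = (Finset.univ.filter (fun i => x i ≠ 0)).card := by
  rw [ell0, ← Set.ncard_coe_finset]
  congr 1
  ext i
  simp [Function.support]

lemma ell0_zero : ell0 (0 : Fin d → ℝ) = 0 := by simp [ell0_filter]

lemma ell0_neg (x : Fin d → ℝ) : ell0 (-x) = ell0 x := by
  simp [ell0_filter]

lemma ell0_pos {x : Fin d → ℝ} (hx : x ≠ 0) : 1 ≤ ell0 x := by
  rw [ell0_filter, Nat.one_le_iff_ne_zero, ← Nat.pos_iff_ne_zero, Finset.card_pos]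
  obtain ⟨i, hi⟩ := Function.ne_iff.1 hx
  exact ⟨i, by simpa using hi⟩

lemma ell0_le_d (x : Fin d → ℝ) : ell0 x ≤ d := by
  rw [ell0_filter]
  simpa using Finset.card_filter_le Finset.univ (fun i => x i ≠ 0)

lemma ne_zero_of_ell0_pos {x : Fin d → ℝ} (h : 1 ≤ ell0 x) : x ≠ 0 := by
  intro hx; rw [hx, ell0_zero] at h; omega

/-- Lemma A: the ratio is bounded by the dual coordinate norm. -/
lemma ratio_le_dualCoord (hN : IsNorm N) {c : ℝ} (hc : 0 < c) (hcl : ∀ x, c * ‖x‖ ≤ N x)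
    {x : Fin d → ℝ} (hx : x ≠ 0) (y : Fin d → ℝ) {l : ℕ} (hl : ell0 x ≤ l) :
    dotp x y / N x ≤ dualCoord N l y := by
  classical
  set K := Finset.univ.filter (fun i => x i ≠ 0) with hKdef
  have hK : K.card ≤ l := by rw [← ell0_filter]; exact hl
  have hxK : x ∈ RK K := by
    intro j hj
    by_contra h
    exact hj (by simp [hKdef, h])
  have hNx : 0 < N x := N_pos hN hx
  have hmemK : (N x)⁻¹ • x ∈ RK K := by
    intro j hj
    simp [hxK j hj]
  have hmem1 : N ((N x)⁻¹ • x) ≤ 1 := by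
    rw [hN.smul, abs_inv, abs_of_pos hNx, inv_mul_cancel₀ hNx.ne']
  have h1 : dotp ((N x)⁻¹ • x) (projK K y) ≤ restStar N K (projK K y) :=
    le_restStar hN hc hcl hmemK hmem1
  rw [dotp_smul, dotp_proj hxK] at h1
  rw [div_eq_inv_mul]
  exact h1.trans (le_dualCoord hN hc hcl hK y)

/-- Existence of a vector of any prescribed ℓ0 ≤ d. -/
lemma exists_ell0_eq {l : ℕ} (hl : l ≤ d) : ∃ x : Fin d → ℝ, ell0 x = l := by
  classical
  obtain ⟨t, -, ht⟩ := Finset.exists_superset_card_eq (s := (∅ : Finset (Fin d)))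
    (by simp) (by simpa using hl)
  refine ⟨fun i => if i ∈ t then 1 else 0, ?_⟩
  rw [ell0_filter, ← ht]
  congr 1
  ext i
  by_cases h : i ∈ t <;> simp [h]

/-- Perturbation lemma: the bound at ℓ0 = l extends to ℓ0 ≤ l. -/
lemma ratio_le_of_eq (hN : IsNorm N) (y : Fin d → ℝ) {l : ℕ} {lam : ℝ}
    (hl1 : 1 ≤ l) (hld : l ≤ d)
    (h : ∀ z : Fin d → ℝ, z ≠ 0 → ell0 z = l → dotp z y / N z ≤ lam) :
    ∀ x : Fin d → ℝ, x ≠ 0 → ell0 x ≤ l → dotp x y / N x ≤ lam := by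
  classical
  intro x hx hxl
  set s := Finset.univ.filter (fun i => x i ≠ 0) with hsdef
  have hscard : s.card ≤ l := by rw [← ell0_filter]; exact hxl
  obtain ⟨t, hst, htcard⟩ := Finset.exists_superset_card_eq (s := s) hscard
    (by simpa using hld)
  set v : Fin d → ℝ := fun i => if i ∈ t \ s then 1 else 0 with hvdef
  have hsupp : ∀ ε : ℝ, ε ≠ 0 →
      (Finset.univ.filter (fun i => (x + ε • v) i ≠ 0)) = t := by
    intro ε hε
    ext i
    simp only [Finset.mem_filter, Finset.mem_univ, true_and, Pi.add_apply, Pi.smul_apply,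
      smul_eq_mul]
    by_cases hi : i ∈ s
    · have hxi : x i ≠ 0 := by simpa [hsdef] using hi
      have hvi : v i = 0 := by simp [hvdef, hi]
      simp [hvi, hxi, hst hi]
    · have hxi : x i = 0 := by
        by_contra h'
        exact hi (by simp [hsdef, h'])
      by_cases hit : i ∈ t
      · have hvi : v i = 1 := by simp [hvdef, hit, hi]
        simp [hvi, hxi, hε, hit]
      · have hvi : v i = 0 := by simp [hvdef, hit]
        simp [hvi, hxi, hit]
  have hell : ∀ ε : ℝ, ε ≠ 0 → ell0 (x + ε • v) = l := by
    intro ε hε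
    rw [ell0_filter, hsupp ε hε, htcard]
  have hNx : N x ≠ 0 := (N_pos hN hx).ne'
  have hcont : Filter.Tendsto (fun ε : ℝ => dotp (x + ε • v) y / N (x + ε • v))
      (nhdsWithin 0 {0}ᶜ) (nhds (dotp x y / N x)) := by
    have hc1 : Continuous fun ε : ℝ => x + ε • v := continuous_const.add (continuous_id.smul continuous_const)
    have hc2 : Continuous fun w : Fin d → ℝ => dotp w y :=
      continuous_finset_sum _ fun i _ => (continuous_apply i).mul continuous_const
    have hc3 : Continuous fun ε : ℝ =>
        dotp (x + ε • v) y / N (x + ε • v) := by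
      refine Continuous.div (hc2.comp hc1) ((N_cont hN).comp hc1) ?_
      intro ε
      refine (N_pos hN ?_).ne'
      intro h0
      have : ell0 (x + ε • v) = 0 := by rw [h0, ell0_zero]
      by_cases hε : ε = 0
      · rw [hε] at h0; simp at h0; exact hx h0
      · rw [hell ε hε] at this; omega
    have := hc3.tendsto 0
    simp only [zero_smul, add_zero] at this
    exact this.mono_left nhdsWithin_le_nhds
  refine le_of_tendsto hcont ?_
  filter_upwards [self_mem_nhdsWithin] with ε hε
  have hε : ε ≠ 0 := hε
  refine h _ (ne_zero_of_ell0_pos ?_) (hell ε hε)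
  rw [hell ε hε]; exact hl1

/-- EReal arithmetic: `c + u ≤ -v ↔ c ≤ -(u + v)`. -/
lemma ereal_aux (c : ℝ) (u v : EReal) : (c : EReal) + u ≤ -v ↔ (c : EReal) ≤ -(u + v) := by
  induction u using EReal.rec with
  | bot => simp
  | top =>
    induction v using EReal.rec with
    | bot => simp
    | coe r => simp [EReal.add_top_of_ne_bot]
    | top => simp
  | coe s =>
    induction v using EReal.rec with
    | bot => simp
    | coe r =>
      rw [← EReal.coe_add, ← EReal.coe_add, ← EReal.coe_neg, ← EReal.coe_neg,
        EReal.coe_le_coe_iff, EReal.coe_le_coe_iff]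
      constructor <;> intro <;> linarith
    | top => simp [EReal.add_top_of_ne_bot]

end St17

theorem statement17 {d : ℕ} (N : (Fin d → ℝ) → ℝ) (hN : IsNorm N) (φ : ℕ → EReal) :
    {y : Fin d → ℝ |
        capraConj N (fun z => φ (ell0 z)) y
          = ((capra N 0 y : ℝ) : EReal) + (- φ (ell0 (0 : Fin d → ℝ)))}
      = ⋂ l ∈ Finset.Icc 1 d, scaledDualBall N l (uadd (φ l) (- φ 0)) := by
  classical
  obtain ⟨c, hc, hcl⟩ := St17.N_ge hN
  ext y
  simp only [Set.mem_setOf_eq, Set.mem_iInter]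
  have h0 : capra N 0 y = 0 := if_pos rfl
  have he0 : ell0 (0 : Fin d → ℝ) = 0 := St17.ell0_zero
  have hterm0 : ((capra N 0 y : ℝ) : EReal) + (-φ (ell0 (0 : Fin d → ℝ))) = -φ 0 := by
    rw [h0, he0, EReal.coe_zero, zero_add]
  rw [hterm0]
  have hiff : capraConj N (fun z => φ (ell0 z)) y = -φ 0 ↔
      ∀ x : Fin d → ℝ, ((capra N x y : ℝ) : EReal) + (-φ (ell0 x)) ≤ -φ 0 := by
    constructor
    · intro h x
      rw [← h]
      exact le_iSup (fun x => ((capra N x y : ℝ) : EReal) + (-φ (ell0 x))) x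
    · intro h
      refine le_antisymm (iSup_le h) ?_
      rw [← hterm0]
      exact le_iSup (fun x => ((capra N x y : ℝ) : EReal) + (-φ (ell0 x))) 0
  rw [hiff]
  constructor
  · intro h l hl
    rw [Finset.mem_Icc] at hl
    obtain ⟨hl1, hld⟩ := hl
    have hΛ : uadd (φ l) (-φ 0) = -((-φ l) + φ 0) := by rw [uadd, neg_neg]
    unfold scaledDualBall
    split_ifs with h1 h2
    · trivial
    · exfalso
      obtain ⟨x, hxl⟩ := St17.exists_ell0_eq (d := d) hld
      have hx : x ≠ 0 := St17.ne_zero_of_ell0_pos (by omega)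
      have hx' : (-x) ≠ 0 := neg_ne_zero.2 hx
      have key : ∀ z : Fin d → ℝ, z ≠ 0 → ell0 z = l →
          ((dotp z y / N z : ℝ) : EReal) < ((0 : ℝ) : EReal) := by
        intro z hz hzl
        have h3 := (St17.ereal_aux _ _ _).1 (h z)
        rw [hzl, ← hΛ] at h3
        simp only [capra, if_neg hz] at h3
        exact lt_of_le_of_lt h3 (by rwa [EReal.coe_zero])
      have k1 := EReal.coe_lt_coe_iff.1 (key x hx hxl)
      have k2 := EReal.coe_lt_coe_iff.1 (key (-x) hx' (by rw [St17.ell0_neg, hxl]))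
      rw [St17.dotp_neg, St17.N_neg hN, neg_div] at k2
      linarith
    · have hΛ0 : 0 ≤ uadd (φ l) (-φ 0) := not_lt.1 h2
      have hne_bot : uadd (φ l) (-φ 0) ≠ ⊥ := by
        intro hb; rw [hb] at hΛ0; exact absurd hΛ0 (by simp)
      set lam := (uadd (φ l) (-φ 0)).toReal with hlamdef
      have hΛeq : uadd (φ l) (-φ 0) = (lam : EReal) := (EReal.coe_toReal h1 hne_bot).symm
      have hlam0 : 0 ≤ lam := by
        have := EReal.toReal_le_toReal hΛ0 (by simp) h1
        simpa using this
      have hzl : ∀ z : Fin d → ℝ, z ≠ 0 → ell0 z = l → dotp z y / N z ≤ lam := by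
        intro z hz hzel
        have h3 := (St17.ereal_aux _ _ _).1 (h z)
        rw [hzel, ← hΛ, hΛeq] at h3
        simp only [capra, if_neg hz] at h3
        exact EReal.coe_le_coe_iff.1 h3
      show y ∈ {y | ((dualCoord N l y : ℝ) : EReal) ≤ uadd (φ l) (-φ 0)}
      simp only [Set.mem_setOf_eq, hΛeq, EReal.coe_le_coe_iff]
      refine St17.dualCoord_le fun K hK => St17.restStar_le hN K _ fun x hxK hx1 => ?_
      rw [St17.dotp_proj hxK]
      by_cases hx : x = 0
      · rw [hx, St17.dotp_zero]; exact hlam0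
      · have hxl : ell0 x ≤ l := by
          refine le_trans ?_ hK
          rw [St17.ell0_filter]
          refine Finset.card_le_card fun i hi => ?_
          simp only [Finset.mem_filter, Finset.mem_univ, true_and] at hi
          by_contra hiK
          exact hi (hxK i hiK)
        have hr := St17.ratio_le_of_eq hN y hl1 hld hzl x hx hxl
        have hNx := St17.N_pos hN hx
        rw [div_le_iff₀ hNx] at hr
        nlinarith
  · intro h x
    by_cases hx : x = 0
    · rw [hx, h0, he0, EReal.coe_zero, zero_add]
    · have hl1 : 1 ≤ ell0 x := St17.ell0_pos hx
      have hld : ell0 x ≤ d := St17.ell0_le_d x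
      have hb := h (ell0 x) (Finset.mem_Icc.2 ⟨hl1, hld⟩)
      rw [St17.ereal_aux]
      rw [show -((-φ (ell0 x)) + φ 0) = uadd (φ (ell0 x)) (-φ 0) from by rw [uadd, neg_neg]]
      unfold scaledDualBall at hb
      split_ifs at hb with h1 h2
      · rw [h1]; exact le_top
      · exact absurd hb (Set.notMem_empty y)
      · have hb' : ((dualCoord N (ell0 x) y : ℝ) : EReal) ≤ uadd (φ (ell0 x)) (-φ 0) := hb
        refine le_trans ?_ hb'
        simp only [capra, if_neg hx]
        exact EReal.coe_le_coe_iff.2 (St17.ratio_le_dualCoord hN hc hcl hx y le_rfl)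
end
end

section
/- Let ⦀·⦀ be a norm on ℝ^d, φ : {0,…,d} → ℝ̄, and x ∈ ℝ^d with x ≠ 0; set l = ℓ0(x) ≥ 1 and suppose −∞ < φ(l) < +∞. Then y ∈ ∂_¢(φ∘ℓ0)(x) if and only if both (i) y belongs to the normal cone N_{B_l}( x / ⦀x⦀_l ) to the unit ball B_l of the coordinate-l norm at x/⦀x⦀_l, and (ii) l maximizes j ↦ ⦀y⦀_{j,★} − φ(j) over j ∈ {0,…,d} (with the convention ⦀·⦀_{0,★} = 0 and where the subtraction is the Moreau lower addition). -/
open scoped BigOperators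

noncomputable section

namespace Aux
variable {d : ℕ} {N : (Fin d → ℝ) → ℝ}

lemma dotp_zero_left (y : Fin d → ℝ) : dotp 0 y = 0 := by simp [dotp]
lemma dotp_zero_right (x : Fin d → ℝ) : dotp x 0 = 0 := by simp [dotp]
lemma dotp_smul_left (c : ℝ) (x y : Fin d → ℝ) : dotp (c • x) y = c * dotp x y := by
  simp [dotp, Finset.mul_sum, mul_assoc]
lemma dotp_neg_left (x y : Fin d → ℝ) : dotp (-x) y = - dotp x y := by
  simp [dotp, ← Finset.sum_neg_distrib]
lemma dotp_add_left (x x' y : Fin d → ℝ) : dotp (x + x') y = dotp x y + dotp x' y := by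
  simp [dotp, add_mul, Finset.sum_add_distrib]
lemma dotp_sub_left (x x' y : Fin d → ℝ) : dotp (x - x') y = dotp x y - dotp x' y := by
  simp [dotp, sub_mul, Finset.sum_sub_distrib]
lemma dotp_projK {K : Finset (Fin d)} {x : Fin d → ℝ} (y : Fin d → ℝ) (hx : x ∈ RK K) :
    dotp x (projK K y) = dotp x y := by
  unfold dotp projK
  refine Finset.sum_congr rfl fun i _ => ?_
  by_cases h : i ∈ K
  · simp [h]
  · simp [h, hx i h]
lemma dotp_le_sum_abs (x y : Fin d → ℝ) : dotp x y ≤ ∑ i, |x i| * |y i| := by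
  refine Finset.sum_le_sum fun i _ => ?_
  calc x i * y i ≤ |x i * y i| := le_abs_self _
  _ = |x i| * |y i| := abs_mul _ _

def suppF {d : ℕ} (z : Fin d → ℝ) : Finset (Fin d) := Finset.univ.filter (fun i => z i ≠ 0)

lemma support_eq (z : Fin d → ℝ) : Function.support z = ↑(suppF z) := by
  ext i; simp [Function.mem_support, suppF]

lemma ell0_eq_card (z : Fin d → ℝ) : ell0 z = (suppF z).card := by
  rw [ell0, support_eq, Set.ncard_coe_finset]

lemma ell0_zero : ell0 (0 : Fin d → ℝ) = 0 := by simp [ell0]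

lemma ell0_eq_zero_iff (z : Fin d → ℝ) : ell0 z = 0 ↔ z = 0 := by
  rw [ell0_eq_card, Finset.card_eq_zero]
  constructor
  · intro h; funext i
    show z i = 0
    by_contra hi
    have : i ∈ suppF z := by simp [suppF, hi]
    simp [h] at this
  · intro h; subst h; simp [suppF]

lemma ell0_neg (z : Fin d → ℝ) : ell0 (-z) = ell0 z := by
  unfold ell0; congr 1; ext i; simp [Function.mem_support]

lemma ell0_le_d (z : Fin d → ℝ) : ell0 z ≤ d := by
  rw [ell0_eq_card]
  calc (suppF z).card ≤ (Finset.univ : Finset (Fin d)).card := Finset.card_le_card (by simp [suppF])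
  _ = d := by simp

lemma mem_RK_suppF (z : Fin d → ℝ) : z ∈ RK (suppF z) := by
  intro j hj; by_contra h; exact hj (by simp [suppF, h])

lemma zero_mem_RK (K : Finset (Fin d)) : (0 : Fin d → ℝ) ∈ RK K := fun j _ => rfl

lemma smul_mem_RK {K : Finset (Fin d)} {z : Fin d → ℝ} (c : ℝ) (hz : z ∈ RK K) :
    c • z ∈ RK K := fun j hj => by simp [hz j hj]

lemma ell0_le_of_mem_RK {K : Finset (Fin d)} {z : Fin d → ℝ} (hz : z ∈ RK K) :
    ell0 z ≤ K.card := by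
  rw [ell0_eq_card]
  refine Finset.card_le_card fun i hi => ?_
  by_contra h
  have hi' : z i ≠ 0 := by simpa [suppF] using hi
  exact hi' (hz i h)

lemma ell0_indicator (K : Finset (Fin d)) {t : ℝ} (ht : t ≠ 0) :
    ell0 (fun i => if i ∈ K then t else 0) = K.card := by
  rw [ell0_eq_card]; congr 1
  ext i; by_cases h : i ∈ K <;> simp [suppF, h, ht]

-- norm basics
lemma N_zero (hN : IsNorm N) : N 0 = 0 := (hN.eq_zero_iff 0).2 rfl
lemma N_neg (hN : IsNorm N) (z : Fin d → ℝ) : N (-z) = N z := by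
  have := hN.smul (-1) z; simpa using this
lemma N_nonneg (hN : IsNorm N) (z : Fin d → ℝ) : 0 ≤ N z := by
  have h := hN.triangle z (-z)
  rw [add_neg_cancel, N_zero hN, N_neg hN] at h
  linarith
lemma N_pos (hN : IsNorm N) {z : Fin d → ℝ} (hz : z ≠ 0) : 0 < N z :=
  lt_of_le_of_ne (N_nonneg hN z) (fun h => hz ((hN.eq_zero_iff z).1 h.symm))
lemma N_smul_inv (hN : IsNorm N) {z : Fin d → ℝ} (hz : z ≠ 0) : N ((N z)⁻¹ • z) = 1 := by
  rw [hN.smul, abs_of_nonneg (inv_nonneg.2 (N_nonneg hN z)),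
    inv_mul_cancel₀ (N_pos hN hz).ne']
lemma N_sum_le (hN : IsNorm N) {α : Type*} (s : Finset α) (f : α → Fin d → ℝ) :
    N (∑ i ∈ s, f i) ≤ ∑ i ∈ s, N (f i) := by
  classical
  induction s using Finset.induction_on with
  | empty => simp [N_zero hN]
  | @insert a s ha ih =>
    rw [Finset.sum_insert ha, Finset.sum_insert ha]
    exact le_trans (hN.triangle _ _) (by linarith)


def ee {d : ℕ} (i : Fin d) : Fin d → ℝ := fun j => if i = j then (1:ℝ) else 0

lemma N_upper (hN : IsNorm N) (z : Fin d → ℝ) : N z ≤ (∑ i, N (ee i)) * ‖z‖ := by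
  have hz : z = ∑ i, z i • ee i := pi_eq_sum_univ z
  calc N z = N (∑ i, z i • ee i) := by rw [← hz]
  _ ≤ ∑ i, N (z i • ee i) := N_sum_le hN _ _
  _ = ∑ i, |z i| * N (ee i) := by simp [hN.smul]
  _ ≤ ∑ i, ‖z‖ * N (ee i) := by
      refine Finset.sum_le_sum fun i _ => ?_
      have h1 : |z i| ≤ ‖z‖ := by
        simpa [Real.norm_eq_abs] using norm_le_pi_norm z i
      exact mul_le_mul_of_nonneg_right h1 (N_nonneg hN _)
  _ = (∑ i, N (ee i)) * ‖z‖ := by rw [← Finset.mul_sum, mul_comm]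

lemma N_continuous (hN : IsNorm N) : Continuous N := by
  set C := ∑ i, N (ee (d := d) i) with hC
  have hlip : LipschitzWith (Real.toNNReal C) N := by
    refine LipschitzWith.of_dist_le_mul fun a b => ?_
    have h1 : N a - N b ≤ N (a - b) := by
      have := hN.triangle (a - b) b; simpa using this
    have h2 : N b - N a ≤ N (a - b) := by
      have := hN.triangle (b - a) a
      rw [sub_add_cancel] at this
      calc N b - N a ≤ N (b - a) := by linarith
      _ = N (a - b) := by rw [← N_neg hN (a - b)]; ring_nf
    have h3 : |N a - N b| ≤ N (a - b) := abs_le.2 ⟨by linarith, h1⟩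
    have h4 : N (a - b) ≤ C * ‖a - b‖ := N_upper hN _
    have h5 : C ≤ Real.toNNReal C := Real.le_coe_toNNReal C
    rw [Real.dist_eq, dist_eq_norm]
    calc |N a - N b| ≤ C * ‖a - b‖ := le_trans h3 h4
    _ ≤ Real.toNNReal C * ‖a - b‖ := mul_le_mul_of_nonneg_right h5 (norm_nonneg _)
  exact hlip.continuous

lemma N_lower (hN : IsNorm N) : ∃ c : ℝ, 0 < c ∧ ∀ z, c * ‖z‖ ≤ N z := by
  by_cases hd : Nonempty (Fin d)
  · have hnt : Nontrivial (Fin d → ℝ) := by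
      obtain ⟨i⟩ := hd
      refine ⟨ee i, 0, fun h => ?_⟩
      have := congrFun h i
      simp [ee] at this
    have hcs : IsCompact (Metric.sphere (0 : Fin d → ℝ) 1) := isCompact_sphere _ _
    have hne : (Metric.sphere (0 : Fin d → ℝ) 1).Nonempty := by
      rw [NormedSpace.sphere_nonempty]; norm_num
    obtain ⟨z₀, hz₀mem, hz₀min⟩ := hcs.exists_isMinOn hne ((N_continuous hN).continuousOn)
    have hz₀ : z₀ ≠ 0 := by
      intro h
      rw [h] at hz₀mem
      simp [Metric.mem_sphere] at hz₀mem
    refine ⟨N z₀, N_pos hN hz₀, fun z => ?_⟩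
    by_cases hz : z = 0
    · simp [hz, N_zero hN]
    · have hzn : (0:ℝ) < ‖z‖ := norm_pos_iff.2 hz
      have hmem : ‖z‖⁻¹ • z ∈ Metric.sphere (0 : Fin d → ℝ) 1 := by
        rw [mem_sphere_zero_iff_norm, norm_smul, norm_inv, norm_norm,
          inv_mul_cancel₀ hzn.ne']
      have hmin := hz₀min hmem
      have : N z₀ ≤ N (‖z‖⁻¹ • z) := hmin
      rw [hN.smul, abs_of_nonneg (inv_nonneg.2 hzn.le)] at this
      calc N z₀ * ‖z‖ ≤ (‖z‖⁻¹ * N z) * ‖z‖ :=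
        mul_le_mul_of_nonneg_right this hzn.le
      _ = N z := by field_simp
  · refine ⟨1, one_pos, fun z => ?_⟩
    have hz : z = 0 := funext fun i => absurd ⟨i⟩ hd
    simp [hz, N_zero hN]

lemma exists_dual_vec (hN : IsNorm N) {x : Fin d → ℝ} (hx : x ≠ 0) :
    ∃ u : Fin d → ℝ, dotp x u = N x ∧ ∀ z, dotp z u ≤ N z := by
  have H : ∀ c : ℝ, c • x = 0 → c • N x = 0 := by
    intro c hc
    rcases smul_eq_zero.1 hc with h | h
    · simp [h]
    · exact absurd h hx
  set f : (Fin d → ℝ) →ₗ.[ℝ] ℝ := LinearPMap.mkSpanSingleton' x (N x) H with hf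
  have hdom : f.domain = Submodule.span ℝ {x} := LinearPMap.domain_mkSpanSingleton x (N x) H
  have hsub : ∀ v : f.domain, f v ≤ N v := by
    rintro ⟨v, hv⟩
    rw [hdom] at hv
    obtain ⟨c, hc⟩ := Submodule.mem_span_singleton.1 hv
    subst hc
    have happ : f ⟨c • x, by rw [hdom]; exact Submodule.smul_mem _ c (Submodule.mem_span_singleton_self x)⟩ = c • N x :=
      LinearPMap.mkSpanSingleton'_apply x (N x) H c _
    rw [happ]
    calc c • N x = c * N x := rfl
    _ ≤ |c| * N x := mul_le_mul_of_nonneg_right (le_abs_self c) (N_nonneg hN x)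
    _ = N (c • x) := (hN.smul c x).symm
  obtain ⟨g, hg1, hg2⟩ := exists_extension_of_le_sublinear f N
    (fun c hc z => by rw [hN.smul, abs_of_pos hc]) hN.triangle hsub
  refine ⟨fun i => g (ee i), ?_, ?_⟩
  · have hxmem : x ∈ f.domain := by rw [hdom]; exact Submodule.mem_span_singleton_self x
    have := hg1 ⟨x, hxmem⟩
    have hfx : f ⟨x, hxmem⟩ = N x := LinearPMap.mkSpanSingleton'_apply_self x (N x) H _
    have hgz : ∀ z : Fin d → ℝ, dotp z (fun i => g (ee i)) = g z := by
      intro z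
      conv_rhs => rw [pi_eq_sum_univ z]
      rw [map_sum]
      simp only [map_smul, smul_eq_mul, dotp]
      rfl
    rw [hgz x, this, hfx]
  · intro z
    have hgz : dotp z (fun i => g (ee i)) = g z := by
      conv_rhs => rw [pi_eq_sum_univ z]
      rw [map_sum]
      simp only [map_smul, smul_eq_mul, dotp]
      rfl
    rw [hgz]; exact hg2 z

-- ## restStar and dualCoord

lemma dotp_smul_right (c : ℝ) (x y : Fin d → ℝ) : dotp x (c • y) = c * dotp x y := by
  unfold dotp
  rw [Finset.mul_sum]
  exact Finset.sum_congr rfl fun i _ => by simp [Pi.smul_apply]; ring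

lemma dotp_ee (i : Fin d) (u : Fin d → ℝ) : dotp (ee i) u = u i := by
  simp [dotp, ee]

lemma ell0_ee (i : Fin d) : ell0 (ee i) = 1 := by
  rw [ell0_eq_card]
  have : suppF (ee i) = {i} := by
    ext j; by_cases h : i = j <;> simp [suppF, ee, h, eq_comm]
  rw [this, Finset.card_singleton]

lemma ee_ne_zero (i : Fin d) : ee (d := d) i ≠ 0 := by
  intro h
  have := congrFun h i
  simp [ee] at this

lemma dotp_bound_of_N_le_one (hN : IsNorm N) {c : ℝ} (hc : 0 < c)
    (hlow : ∀ z, c * ‖z‖ ≤ N z) {x : Fin d → ℝ} (hx : N x ≤ 1) (w : Fin d → ℝ) :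
    dotp x w ≤ c⁻¹ * ∑ i, |w i| := by
  have hxn : ‖x‖ ≤ c⁻¹ := by
    have h := hlow x
    have h1 : c * ‖x‖ ≤ 1 := le_trans h hx
    calc ‖x‖ = c⁻¹ * (c * ‖x‖) := by field_simp
    _ ≤ c⁻¹ * 1 := mul_le_mul_of_nonneg_left h1 (inv_nonneg.2 hc.le)
    _ = c⁻¹ := mul_one _
  calc dotp x w ≤ ∑ i, |x i| * |w i| := dotp_le_sum_abs x w
  _ ≤ ∑ i, c⁻¹ * |w i| := by
      refine Finset.sum_le_sum fun i _ => ?_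
      refine mul_le_mul_of_nonneg_right ?_ (abs_nonneg _)
      have h1 : |x i| ≤ ‖x‖ := by simpa [Real.norm_eq_abs] using norm_le_pi_norm x i
      linarith
  _ = c⁻¹ * ∑ i, |w i| := by rw [Finset.mul_sum]

lemma restSet_nonempty (K : Finset (Fin d)) (w : Fin d → ℝ) (hN : IsNorm N) :
    (0:ℝ) ∈ {r | ∃ x ∈ RK K, N x ≤ 1 ∧ r = dotp x w} :=
  ⟨0, zero_mem_RK K, by rw [N_zero hN]; norm_num, (dotp_zero_left w).symm⟩

lemma restSet_bdd (hN : IsNorm N) (K : Finset (Fin d)) (w : Fin d → ℝ) :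
    BddAbove {r | ∃ x ∈ RK K, N x ≤ 1 ∧ r = dotp x w} := by
  obtain ⟨c, hc, hlow⟩ := N_lower hN
  refine ⟨c⁻¹ * ∑ i, |w i|, ?_⟩
  rintro r ⟨x, _, hx1, rfl⟩
  exact dotp_bound_of_N_le_one hN hc hlow hx1 w

lemma restStar_nonneg (hN : IsNorm N) (K : Finset (Fin d)) (w : Fin d → ℝ) :
    0 ≤ restStar N K w :=
  le_csSup (restSet_bdd hN K w) (restSet_nonempty K w hN)

lemma restStar_le (hN : IsNorm N) {K : Finset (Fin d)} {w : Fin d → ℝ} {M : ℝ}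
    (h : ∀ x ∈ RK K, N x ≤ 1 → dotp x w ≤ M) : restStar N K w ≤ M := by
  refine csSup_le ⟨0, restSet_nonempty K w hN⟩ ?_
  rintro r ⟨x, hx, hx1, rfl⟩
  exact h x hx hx1

lemma le_restStar (hN : IsNorm N) {K : Finset (Fin d)} {x : Fin d → ℝ} (w : Fin d → ℝ)
    (hx : x ∈ RK K) (hx1 : N x ≤ 1) : dotp x w ≤ restStar N K w :=
  le_csSup (restSet_bdd hN K w) ⟨x, hx, hx1, rfl⟩

lemma restStar_empty (hN : IsNorm N) (w : Fin d → ℝ) :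
    restStar N (∅ : Finset (Fin d)) w = 0 := by
  have h1 : restStar N ∅ w ≤ 0 := by
    refine restStar_le hN fun x hx _ => ?_
    have : x = 0 := funext fun i => hx i (by simp)
    rw [this, dotp_zero_left]
  exact le_antisymm h1 (restStar_nonneg hN ∅ w)

lemma dualSet_nonempty (k : ℕ) (y : Fin d → ℝ) :
    Set.Nonempty {r | ∃ K : Finset (Fin d), K.card ≤ k ∧ r = restStar N K (projK K y)} :=
  ⟨restStar N ∅ (projK ∅ y), ∅, by simp, rfl⟩

lemma abs_projK_le (K : Finset (Fin d)) (y : Fin d → ℝ) (i : Fin d) :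
    |projK K y i| ≤ |y i| := by
  unfold projK; by_cases h : i ∈ K <;> simp [h]

lemma dualSet_bdd (hN : IsNorm N) (k : ℕ) (y : Fin d → ℝ) :
    BddAbove {r | ∃ K : Finset (Fin d), K.card ≤ k ∧ r = restStar N K (projK K y)} := by
  obtain ⟨c, hc, hlow⟩ := N_lower hN
  refine ⟨c⁻¹ * ∑ i, |y i|, ?_⟩
  rintro r ⟨K, _, rfl⟩
  refine restStar_le hN fun x hx hx1 => ?_
  calc dotp x (projK K y) ≤ c⁻¹ * ∑ i, |projK K y i| :=
        dotp_bound_of_N_le_one hN hc hlow hx1 _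
  _ ≤ c⁻¹ * ∑ i, |y i| := by
      refine mul_le_mul_of_nonneg_left ?_ (inv_nonneg.2 hc.le)
      exact Finset.sum_le_sum fun i _ => abs_projK_le K y i

lemma dualCoord_nonneg (hN : IsNorm N) (k : ℕ) (y : Fin d → ℝ) :
    0 ≤ dualCoord N k y := by
  have h0 : restStar N ∅ (projK ∅ y) = 0 := restStar_empty hN _
  have : (0:ℝ) ∈ {r | ∃ K : Finset (Fin d), K.card ≤ k ∧ r = restStar N K (projK K y)} :=
    ⟨∅, by simp, h0.symm⟩
  exact le_csSup (dualSet_bdd hN k y) this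

lemma dualCoord_le (hN : IsNorm N) {k : ℕ} {y : Fin d → ℝ} {M : ℝ} (hM : 0 ≤ M)
    (h : ∀ z : Fin d → ℝ, z ≠ 0 → ell0 z ≤ k → dotp z y ≤ M * N z) :
    dualCoord N k y ≤ M := by
  refine csSup_le (dualSet_nonempty k y) ?_
  rintro r ⟨K, hK, rfl⟩
  refine restStar_le hN fun x hx hx1 => ?_
  rw [dotp_projK y hx]
  by_cases hx0 : x = 0
  · rw [hx0, dotp_zero_left]; exact hM
  · calc dotp x y ≤ M * N x := h x hx0 (le_trans (ell0_le_of_mem_RK hx) hK)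
    _ ≤ M * 1 := mul_le_mul_of_nonneg_left hx1 hM
    _ = M := mul_one M

lemma div_le_dualCoord (hN : IsNorm N) {k : ℕ} {z : Fin d → ℝ} (y : Fin d → ℝ)
    (hz : z ≠ 0) (hk : ell0 z ≤ k) : dotp z y / N z ≤ dualCoord N k y := by
  have hKcard : (suppF z).card ≤ k := by rwa [← ell0_eq_card]
  have hmem : restStar N (suppF z) (projK (suppF z) y)
      ∈ {r | ∃ K : Finset (Fin d), K.card ≤ k ∧ r = restStar N K (projK K y)} :=
    ⟨suppF z, hKcard, rfl⟩
  have h1 : restStar N (suppF z) (projK (suppF z) y) ≤ dualCoord N k y :=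
    le_csSup (dualSet_bdd hN k y) hmem
  have hz' : (N z)⁻¹ • z ∈ RK (suppF z) := smul_mem_RK _ (mem_RK_suppF z)
  have h2 : dotp ((N z)⁻¹ • z) (projK (suppF z) y) ≤ restStar N (suppF z) (projK (suppF z) y) :=
    le_restStar hN _ hz' (le_of_eq (N_smul_inv hN hz))
  rw [dotp_projK _ hz', dotp_smul_left] at h2
  rw [div_eq_inv_mul]
  exact le_trans h2 h1

lemma abs_dotp_le_dualCoord (hN : IsNorm N) {k : ℕ} {z : Fin d → ℝ} (y : Fin d → ℝ)
    (hk : ell0 z ≤ k) : |dotp z y| ≤ dualCoord N k y * N z := by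
  by_cases hz : z = 0
  · simp [hz, dotp_zero_left, N_zero hN]
  · have h1 := div_le_dualCoord hN y hz hk
    have h2 : dotp (-z) y / N (-z) ≤ dualCoord N k y := by
      refine div_le_dualCoord hN y (by simpa using hz) ?_
      rwa [ell0_neg]
    rw [dotp_neg_left, N_neg hN] at h2
    have hNz := N_pos hN hz
    rw [abs_le]
    constructor
    · rw [div_le_iff₀ hNz] at h2; linarith
    · rw [div_le_iff₀ hNz] at h1; linarith

lemma dualCoord_mono (hN : IsNorm N) {j k : ℕ} (h : j ≤ k) (y : Fin d → ℝ) :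
    dualCoord N j y ≤ dualCoord N k y := by
  refine dualCoord_le hN (dualCoord_nonneg hN k y) fun z hz hzj => ?_
  have := div_le_dualCoord hN y hz (le_trans hzj h)
  rw [div_le_iff₀ (N_pos hN hz)] at this
  linarith

lemma dualCoord_zero_right (hN : IsNorm N) (k : ℕ) : dualCoord N k (0 : Fin d → ℝ) = 0 := by
  refine le_antisymm ?_ (dualCoord_nonneg hN k 0)
  exact dualCoord_le hN le_rfl fun z hz _ => by
    rw [dotp_zero_right, zero_mul]

lemma dualCoord_smul (hN : IsNorm N) (k : ℕ) (c : ℝ) (y : Fin d → ℝ) :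
    dualCoord N k (c • y) = |c| * dualCoord N k y := by
  have key : ∀ (a : ℝ) (w : Fin d → ℝ), dualCoord N k (a • w) ≤ |a| * dualCoord N k w := by
    intro a w
    refine dualCoord_le hN (mul_nonneg (abs_nonneg a) (dualCoord_nonneg hN k w))
      fun z hz hzk => ?_
    rw [dotp_smul_right]
    calc a * dotp z w ≤ |a * dotp z w| := le_abs_self _
    _ = |a| * |dotp z w| := abs_mul _ _
    _ ≤ |a| * (dualCoord N k w * N z) :=
        mul_le_mul_of_nonneg_left (abs_dotp_le_dualCoord hN w hzk) (abs_nonneg a)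
    _ = |a| * dualCoord N k w * N z := by ring
  by_cases hc : c = 0
  · simp [hc, dualCoord_zero_right hN]
  · refine le_antisymm (key c y) ?_
    have h2 := key c⁻¹ (c • y)
    rw [smul_smul, inv_mul_cancel₀ hc, one_smul, abs_inv] at h2
    have hcp : (0:ℝ) < |c| := abs_pos.2 hc
    calc |c| * dualCoord N k y ≤ |c| * (|c|⁻¹ * dualCoord N k (c • y)) :=
          mul_le_mul_of_nonneg_left h2 hcp.le
    _ = dualCoord N k (c • y) := by field_simp

-- ## coordNorm

lemma abs_le_dualCoord_ee (hN : IsNorm N) {k : ℕ} (hk : 1 ≤ k) (u : Fin d → ℝ) (i : Fin d) :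
    |u i| ≤ dualCoord N k u * N (ee i) := by
  have := abs_dotp_le_dualCoord hN (k := k) (z := ee i) u (by rw [ell0_ee]; exact hk)
  rwa [dotp_ee] at this

lemma dualCoord_eq_zero (hN : IsNorm N) {k : ℕ} (hk : 1 ≤ k) {u : Fin d → ℝ}
    (h : dualCoord N k u = 0) : u = 0 := by
  funext i
  have h1 := abs_le_dualCoord_ee hN hk u i
  rw [h, zero_mul] at h1
  have := abs_nonneg (u i)
  show u i = 0
  have : |u i| = 0 := le_antisymm h1 this
  exact abs_eq_zero.1 this

lemma dualCoord_pos_ee (hN : IsNorm N) {k : ℕ} (hk : 1 ≤ k) (i : Fin d) :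
    0 < dualCoord N k (ee i) := by
  have h1 : dotp (ee i) (ee i) / N (ee i) ≤ dualCoord N k (ee i) :=
    div_le_dualCoord hN _ (ee_ne_zero i) (by rw [ell0_ee]; exact hk)
  rw [dotp_ee] at h1
  have h2 : (0:ℝ) < 1 / N (ee i) := by
    have := N_pos hN (ee_ne_zero i)
    positivity
  calc (0:ℝ) < 1 / N (ee i) := h2
  _ = ee i i / N (ee i) := by simp [ee]
  _ ≤ dualCoord N k (ee i) := h1

lemma coordSet_nonempty (hN : IsNorm N) (k : ℕ) (x : Fin d → ℝ) :
    (0:ℝ) ∈ {r | ∃ u : Fin d → ℝ, dualCoord N k u ≤ 1 ∧ r = dotp x u} :=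
  ⟨0, by rw [dualCoord_zero_right hN]; norm_num, (dotp_zero_right x).symm⟩

lemma coordSet_bdd (hN : IsNorm N) {k : ℕ} (hk : 1 ≤ k) (x : Fin d → ℝ) :
    BddAbove {r | ∃ u : Fin d → ℝ, dualCoord N k u ≤ 1 ∧ r = dotp x u} := by
  refine ⟨∑ i, |x i| * N (ee i), ?_⟩
  rintro r ⟨u, hu, rfl⟩
  calc dotp x u ≤ ∑ i, |x i| * |u i| := dotp_le_sum_abs x u
  _ ≤ ∑ i, |x i| * N (ee i) := by
      refine Finset.sum_le_sum fun i _ => ?_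
      refine mul_le_mul_of_nonneg_left ?_ (abs_nonneg _)
      calc |u i| ≤ dualCoord N k u * N (ee i) := abs_le_dualCoord_ee hN hk u i
      _ ≤ 1 * N (ee i) := mul_le_mul_of_nonneg_right hu (N_nonneg hN _)
      _ = N (ee i) := one_mul _

lemma coordNorm_nonneg (hN : IsNorm N) {k : ℕ} (hk : 1 ≤ k) (x : Fin d → ℝ) :
    0 ≤ coordNorm N k x :=
  le_csSup (coordSet_bdd hN hk x) (coordSet_nonempty hN k x)

lemma dotp_le_coordNorm (hN : IsNorm N) {k : ℕ} (hk : 1 ≤ k) {x u : Fin d → ℝ}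
    (hu : dualCoord N k u ≤ 1) : dotp x u ≤ coordNorm N k x :=
  le_csSup (coordSet_bdd hN hk x) ⟨u, hu, rfl⟩

lemma coordNorm_le (hN : IsNorm N) {k : ℕ} {x : Fin d → ℝ} {M : ℝ}
    (h : ∀ u : Fin d → ℝ, dualCoord N k u ≤ 1 → dotp x u ≤ M) : coordNorm N k x ≤ M := by
  refine csSup_le ⟨0, coordSet_nonempty hN k x⟩ ?_
  rintro r ⟨u, hu, rfl⟩
  exact h u hu

lemma dotp_le_coordNorm_mul (hN : IsNorm N) {k : ℕ} (hk : 1 ≤ k) (x u : Fin d → ℝ) :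
    dotp x u ≤ coordNorm N k x * dualCoord N k u := by
  rcases eq_or_lt_of_le (dualCoord_nonneg hN k u) with h | h
  · have hu0 : u = 0 := dualCoord_eq_zero hN hk h.symm
    rw [hu0, dotp_zero_right, dualCoord_zero_right hN, mul_zero]
  · have h1 : dualCoord N k ((dualCoord N k u)⁻¹ • u) ≤ 1 := by
      rw [dualCoord_smul hN, abs_of_pos (inv_pos.2 h), inv_mul_cancel₀ h.ne']
    have h2 := dotp_le_coordNorm hN hk (x := x) h1
    rw [dotp_smul_right] at h2
    calc dotp x u = dualCoord N k u * ((dualCoord N k u)⁻¹ * dotp x u) := by field_simp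
    _ ≤ dualCoord N k u * coordNorm N k x := mul_le_mul_of_nonneg_left h2 h.le
    _ = coordNorm N k x * dualCoord N k u := mul_comm _ _

lemma coordNorm_pos (hN : IsNorm N) {k : ℕ} (hk : 1 ≤ k) {x : Fin d → ℝ} (hx : x ≠ 0) :
    0 < coordNorm N k x := by
  have : ∃ i, x i ≠ 0 := by
    by_contra h
    push_neg at h
    exact hx (funext h)
  obtain ⟨i, hi⟩ := this
  set s : ℝ := if x i < 0 then -1 else 1 with hs
  set u : Fin d → ℝ := (s * (dualCoord N k (ee i))⁻¹) • ee i with hu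
  have hDee := dualCoord_pos_ee hN hk i
  have hsabs : |s| = 1 := by
    rw [hs]; split <;> norm_num
  have hDu : dualCoord N k u ≤ 1 := by
    rw [hu, dualCoord_smul hN, abs_mul, hsabs, one_mul, abs_of_pos (inv_pos.2 hDee),
      inv_mul_cancel₀ hDee.ne']
  have h1 := dotp_le_coordNorm hN hk (x := x) hDu
  have h2 : dotp x u = s * (dualCoord N k (ee i))⁻¹ * x i := by
    rw [hu, dotp_smul_right]
    have : dotp x (ee i) = x i := by simp [dotp, ee]
    rw [this]
  have h3 : 0 < s * x i := by
    rw [hs]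
    rcases lt_trichotomy (x i) 0 with h | h | h
    · rw [if_pos h]; nlinarith
    · exact absurd h hi
    · rw [if_neg (not_lt.2 h.le)]; nlinarith
  have h4 : 0 < dotp x u := by
    rw [h2]
    have : s * (dualCoord N k (ee i))⁻¹ * x i = (s * x i) * (dualCoord N k (ee i))⁻¹ := by ring
    rw [this]
    positivity
  linarith

lemma coordNorm_smul (hN : IsNorm N) {k : ℕ} (hk : 1 ≤ k) (c : ℝ) (x : Fin d → ℝ) :
    coordNorm N k (c • x) = |c| * coordNorm N k x := by
  have key : ∀ (a : ℝ) (w : Fin d → ℝ), coordNorm N k (a • w) ≤ |a| * coordNorm N k w := by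
    intro a w
    refine coordNorm_le hN fun u hu => ?_
    rw [dotp_smul_left]
    rcases le_or_gt 0 a with ha | ha
    · rw [abs_of_nonneg ha]
      exact mul_le_mul_of_nonneg_left (dotp_le_coordNorm hN hk hu) ha
    · rw [abs_of_neg ha]
      have hnu : dualCoord N k (-u) ≤ 1 := by
        have : (-u : Fin d → ℝ) = (-1 : ℝ) • u := by funext j; simp
        rw [this, dualCoord_smul hN]
        simpa using hu
      have h2 : dotp w (-u) ≤ coordNorm N k w := dotp_le_coordNorm hN hk hnu
      have h3 : dotp w (-u) = - dotp w u := by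
        have : (-u : Fin d → ℝ) = (-1 : ℝ) • u := by funext j; simp
        rw [this, dotp_smul_right]; ring
      rw [h3] at h2
      nlinarith [coordNorm_nonneg hN hk w]
  by_cases hc : c = 0
  · have : (0:Fin d → ℝ) = (0:ℝ) • (0:Fin d → ℝ) := by simp
    have h0 : coordNorm N k (0 : Fin d → ℝ) = 0 := by
      refine le_antisymm ?_ (coordNorm_nonneg hN hk 0)
      refine coordNorm_le hN fun u _ => ?_
      rw [dotp_zero_left]
    simp [hc, h0]
  · refine le_antisymm (key c x) ?_
    have h2 := key c⁻¹ (c • x)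
    rw [smul_smul, inv_mul_cancel₀ hc, one_smul, abs_inv] at h2
    have hcp : (0:ℝ) < |c| := abs_pos.2 hc
    calc |c| * coordNorm N k x ≤ |c| * (|c|⁻¹ * coordNorm N k (c • x)) :=
          mul_le_mul_of_nonneg_left h2 hcp.le
    _ = coordNorm N k (c • x) := by field_simp

lemma coordNorm_eq_N (hN : IsNorm N) {k : ℕ} (hk : 1 ≤ k) {x : Fin d → ℝ}
    (hx : x ≠ 0) (hxk : ell0 x ≤ k) : coordNorm N k x = N x := by
  refine le_antisymm ?_ ?_
  · refine coordNorm_le hN fun u hu => ?_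
    calc dotp x u ≤ |dotp x u| := le_abs_self _
    _ ≤ dualCoord N k u * N x := abs_dotp_le_dualCoord hN u hxk
    _ ≤ 1 * N x := mul_le_mul_of_nonneg_right hu (N_nonneg hN x)
    _ = N x := one_mul _
  · obtain ⟨u, hu1, hu2⟩ := exists_dual_vec hN hx
    have hDu : dualCoord N k u ≤ 1 := by
      refine dualCoord_le hN zero_le_one fun z _ _ => ?_
      rw [one_mul]; exact hu2 z
    calc N x = dotp x u := hu1.symm
    _ ≤ coordNorm N k x := dotp_le_coordNorm hN hk hDu

lemma coordNorm_unit_le_one (hN : IsNorm N) {k : ℕ} (hk : 1 ≤ k) {z : Fin d → ℝ}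
    (hz : z ≠ 0) (hzk : ell0 z ≤ k) : coordNorm N k ((N z)⁻¹ • z) ≤ 1 := by
  refine coordNorm_le hN fun u hu => ?_
  rw [dotp_smul_left]
  have h1 : dotp z u ≤ dualCoord N k u * N z :=
    le_trans (le_abs_self _) (abs_dotp_le_dualCoord hN u hzk)
  have hNz := N_pos hN hz
  calc (N z)⁻¹ * dotp z u ≤ (N z)⁻¹ * (dualCoord N k u * N z) :=
        mul_le_mul_of_nonneg_left h1 (inv_nonneg.2 hNz.le)
  _ = dualCoord N k u := by field_simp
  _ ≤ 1 := hu

-- ## density of exactly-k-sparse vectors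

lemma not_mem_suppF {z : Fin d → ℝ} {i : Fin d} (h : i ∉ suppF z) : z i = 0 := by
  by_contra h'
  exact h (by simp [suppF, h'])

lemma suppF_subset_of_mem_RK {K : Finset (Fin d)} {z : Fin d → ℝ} (hz : z ∈ RK K) :
    suppF z ⊆ K := by
  intro i hi
  by_contra h
  exact (by simpa [suppF] using hi : z i ≠ 0) (hz i h)

lemma exists_ell0_eq {j : ℕ} (hj : j ≤ d) : ∃ z : Fin d → ℝ, ell0 z = j := by
  obtain ⟨K, -, -, hK⟩ := Finset.exists_subsuperset_card_eq
    (Finset.empty_subset (Finset.univ : Finset (Fin d))) (by simp)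
    (by simpa using hj)
  exact ⟨fun i => if i ∈ K then (1:ℝ) else 0, by rw [ell0_indicator K one_ne_zero, hK]⟩

lemma exists_sparse_near (hN : IsNorm N) {k : ℕ} (hk1 : 1 ≤ k) (hkd : k ≤ d)
    (y : Fin d → ℝ) {ε : ℝ} (hε : 0 < ε) :
    ∃ z : Fin d → ℝ, z ≠ 0 ∧ ell0 z = k ∧ dualCoord N k y - ε < dotp z y / N z := by
  set c₀ := dualCoord N k y - ε with hc₀
  rcases lt_or_ge c₀ 0 with hneg | hpos
  · -- trivial case: any exactly-k-sparse vector with nonnegative ratio works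
    obtain ⟨K₁, -, -, hK₁⟩ := Finset.exists_subsuperset_card_eq
      (Finset.empty_subset (Finset.univ : Finset (Fin d))) (by simp) (by simpa using hkd)
    set z₀ : Fin d → ℝ := fun i => if i ∈ K₁ then (1:ℝ) else 0 with hz₀
    have hz₀k : ell0 z₀ = k := by rw [hz₀, ell0_indicator K₁ one_ne_zero, hK₁]
    have hz₀ne : z₀ ≠ 0 := by
      intro h
      rw [h, ell0_zero] at hz₀k
      omega
    rcases le_or_gt 0 (dotp z₀ y) with hd0 | hd0
    · exact ⟨z₀, hz₀ne, hz₀k, lt_of_lt_of_le hneg (div_nonneg hd0 (N_nonneg hN z₀))⟩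
    · refine ⟨-z₀, by simpa using hz₀ne, by rw [ell0_neg]; exact hz₀k, ?_⟩
      rw [dotp_neg_left, N_neg hN]
      have : 0 < -dotp z₀ y := by linarith
      exact lt_of_lt_of_le hneg (div_nonneg this.le (N_nonneg hN z₀))
  · -- main case
    have hlt : c₀ < dualCoord N k y := by rw [hc₀]; linarith
    obtain ⟨r, hrmem, hr⟩ := exists_lt_of_lt_csSup (dualSet_nonempty k y) hlt
    obtain ⟨K, hKcard, rfl⟩ := hrmem
    obtain ⟨r', hr'mem, hr'⟩ := exists_lt_of_lt_csSup ⟨0, restSet_nonempty K (projK K y) hN⟩ hr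
    obtain ⟨x, hxK, hx1, rfl⟩ := hr'mem
    rw [dotp_projK y hxK] at hr'
    have hx0 : x ≠ 0 := by
      intro h
      rw [h, dotp_zero_left] at hr'
      linarith
    have hsupp : (suppF x).card ≤ k := le_trans (Finset.card_le_card (suppF_subset_of_mem_RK hxK)) hKcard
    obtain ⟨K₁, hsub, -, hK₁⟩ := Finset.exists_subsuperset_card_eq
      (Finset.subset_univ (suppF x)) hsupp (by simpa using hkd)
    set w : Fin d → ℝ := fun i => if i ∈ K₁ \ suppF x then (1:ℝ) else 0 with hw
    set δ := dotp x y - c₀ * N x with hδ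
    have hδpos : 0 < δ := by
      have h1 : c₀ * N x ≤ c₀ := by
        calc c₀ * N x ≤ c₀ * 1 := mul_le_mul_of_nonneg_left hx1 hpos
        _ = c₀ := mul_one _
      rw [hδ]; linarith
    set s := c₀ * N w + |dotp w y| with hs
    have hspos : 0 ≤ s := by
      have := N_nonneg hN w
      have := abs_nonneg (dotp w y)
      rw [hs]; nlinarith
    set t := δ / (s + 1) with ht
    have htpos : 0 < t := by rw [ht]; positivity
    set z := x + t • w with hz
    have hzsupp : suppF z = K₁ := by
      ext i
      simp only [suppF, Finset.mem_filter, Finset.mem_univ, true_and]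
      constructor
      · intro hi
        by_contra hiK
        have hx' : x i = 0 := not_mem_suppF (fun h => hiK (hsub h))
        have hw' : w i = 0 := by rw [hw]; simp [hiK]
        rw [hz] at hi
        exact hi (by simp [hx', hw'])
      · intro hi
        by_cases hix : i ∈ suppF x
        · have hw' : w i = 0 := by rw [hw]; simp [hix]
          have hx' : x i ≠ 0 := by simpa [suppF] using hix
          rw [hz]; simpa [hw'] using hx'
        · have hw' : w i = 1 := by rw [hw]; simp [hi, hix]
          have hx' : x i = 0 := not_mem_suppF hix
          rw [hz]
          simp [hx', hw']
          exact htpos.ne'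
    have hzk : ell0 z = k := by rw [ell0_eq_card, hzsupp, hK₁]
    have hzne : z ≠ 0 := by
      intro h
      rw [h, ell0_zero] at hzk
      omega
    refine ⟨z, hzne, hzk, ?_⟩
    have hNz := N_pos hN hzne
    rw [lt_div_iff₀ hNz]
    have hdz : dotp z y = dotp x y + t * dotp w y := by
      rw [hz, dotp_add_left, dotp_smul_left]
    have hNzle : N z ≤ N x + t * N w := by
      calc N z ≤ N x + N (t • w) := hN.triangle x (t • w)
      _ = N x + t * N w := by rw [hN.smul, abs_of_pos htpos]
    have hts : t * (s + 1) = δ := by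
      rw [ht]; field_simp
    have key : t * (c₀ * N w - dotp w y) < δ := by
      have h1 : c₀ * N w - dotp w y ≤ s := by
        have := le_abs_self (-dotp w y)
        rw [hs]; rw [abs_neg] at this; linarith
      calc t * (c₀ * N w - dotp w y) ≤ t * s := mul_le_mul_of_nonneg_left h1 htpos.le
      _ = t * (s + 1) - t := by ring
      _ = δ - t := by rw [hts]
      _ < δ := by linarith
    calc c₀ * N z ≤ c₀ * (N x + t * N w) := mul_le_mul_of_nonneg_left hNzle hpos
    _ = c₀ * N x + t * (c₀ * N w) := by ring
    _ < dotp x y + t * dotp w y := by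
        have : c₀ * N x = dotp x y - δ := by rw [hδ]; ring
        rw [this]; nlinarith [key]
    _ = dotp z y := hdz.symm

-- ## pieces for the main theorem

lemma ecoe_sub (a b : ℝ) : ((a:EReal)) + (-(b:EReal)) = ((a - b : ℝ) : EReal) := by
  rw [← EReal.coe_neg, ← EReal.coe_add, sub_eq_add_neg]

lemma capra_ne {x : Fin d → ℝ} (hx : x ≠ 0) (y : Fin d → ℝ) :
    capra N x y = dotp x y / N x := if_neg hx

lemma capra_zero (y : Fin d → ℝ) : capra N (0 : Fin d → ℝ) y = 0 := if_pos rfl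


lemma dualCoord_zero_left (hN : IsNorm N) (y : Fin d → ℝ) : dualCoord N 0 y = 0 := by
  refine le_antisymm ?_ (dualCoord_nonneg hN 0 y)
  refine dualCoord_le hN le_rfl fun z hz hz0 => ?_
  have : z = 0 := (ell0_eq_zero_iff z).1 (Nat.le_zero.1 hz0)
  exact absurd this hz

lemma coordNorm_zero_left (hN : IsNorm N) (k : ℕ) : coordNorm N k (0 : Fin d → ℝ) ≤ 1 := by
  refine coordNorm_le hN fun u _ => ?_
  rw [dotp_zero_left]; norm_num

lemma capra_le_dualCoord (hN : IsNorm N) {k : ℕ} (z y : Fin d → ℝ)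
    (hk : ell0 z ≤ k) : capra N z y ≤ dualCoord N k y := by
  by_cases hz : z = 0
  · rw [hz, capra_zero]
    exact dualCoord_nonneg hN k y
  · rw [capra_ne hz]
    exact div_le_dualCoord hN y hz hk

end Aux

open Aux in
theorem statement18 {d : ℕ} (N : (Fin d → ℝ) → ℝ) (hN : IsNorm N) (φ : ℕ → EReal)
    (x : Fin d → ℝ) (hx : x ≠ 0)
    (hbot : φ (ell0 x) ≠ ⊥) (htop : φ (ell0 x) ≠ ⊤) (y : Fin d → ℝ) :
    (capraConj N (fun z => φ (ell0 z)) y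
        = ((capra N x y : ℝ) : EReal) + (- φ (ell0 x)))
      ↔ ((∀ x' : Fin d → ℝ, coordNorm N (ell0 x) x' ≤ 1 →
            dotp (x' - (coordNorm N (ell0 x) x)⁻¹ • x) y ≤ 0) ∧
          ∀ j : ℕ, j ≤ d →
            ((dualCoord N j y : ℝ) : EReal) + (- φ j)
              ≤ ((dualCoord N (ell0 x) y : ℝ) : EReal) + (- φ (ell0 x))) := by
  set l := ell0 x with hldef
  have hl1 : 1 ≤ l := by
    rw [hldef, Nat.one_le_iff_ne_zero]
    intro h
    exact hx ((ell0_eq_zero_iff x).1 h)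
  have hld : l ≤ d := ell0_le_d x
  set φl : ℝ := (φ l).toReal with hφldef
  have hφl : φ l = (φl : EReal) := (EReal.coe_toReal htop hbot).symm
  set cx : ℝ := capra N x y with hcx
  have hcxval : cx = dotp x y / N x := capra_ne hx y
  set D : ℕ → ℝ := fun j => dualCoord N j y with hD
  have hcxle : cx ≤ D l := capra_le_dualCoord hN x y le_rfl
  have hNx := N_pos hN hx
  have hCeq : coordNorm N l x = N x := coordNorm_eq_N hN hl1 hx le_rfl
  have hconj : capraConj N (fun z => φ (ell0 z)) y
      = ⨆ z : Fin d → ℝ, ((capra N z y : ℝ) : EReal) + (-φ (ell0 z)) := rfl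
  have hterm_le : ∀ z : Fin d → ℝ,
      ((capra N z y : ℝ) : EReal) + (-φ (ell0 z)) ≤ capraConj N (fun z => φ (ell0 z)) y := by
    intro z
    rw [hconj]
    exact le_iSup (fun z => ((capra N z y : ℝ) : EReal) + (-φ (ell0 z))) z
  -- the target value as a real coercion
  have hT : ((capra N x y : ℝ) : EReal) + (-φ l) = ((cx - φl : ℝ) : EReal) := by
    rw [hφl, ← hcx, ecoe_sub]
  constructor
  · -- forwards
    intro hA
    rw [hT] at hA
    -- (a) D l ≤ cx
    have ha : D l ≤ cx := by
      by_contra hcon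
      push_neg at hcon
      set ε := D l - cx with hε
      have hεpos : 0 < ε := by rw [hε]; linarith
      obtain ⟨z, hzne, hzl, hzgt⟩ := exists_sparse_near hN hl1 hld y hεpos
      have hterm := hterm_le z
      rw [hA, hzl, hφl, capra_ne hzne, ecoe_sub, EReal.coe_le_coe_iff] at hterm
      have : dotp z y / N z ≤ cx := by linarith
      rw [hε] at hzgt
      linarith
    have hDlcx : cx = D l := le_antisymm hcxle ha
    refine ⟨?_, ?_⟩
    · -- normal cone condition
      intro x' hx'
      rw [dotp_sub_left, dotp_smul_left, hCeq, sub_nonpos]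
      have h1 : dotp x' y ≤ coordNorm N l x' * dualCoord N l y :=
        dotp_le_coordNorm_mul hN hl1 x' y
      have h2 : coordNorm N l x' * dualCoord N l y ≤ 1 * dualCoord N l y :=
        mul_le_mul_of_nonneg_right hx' (dualCoord_nonneg hN l y)
      have h3 : dotp x' y ≤ D l := by
        rw [hD]; simp only [one_mul] at h2; exact le_trans h1 h2
      have h4 : (N x)⁻¹ * dotp x y = cx := by rw [hcxval, div_eq_inv_mul]
      rw [h4, hDlcx]
      exact h3
    · -- maximization condition
      intro j hj
      have hgoal : ((D j : ℝ) : EReal) + (-φ j) ≤ capraConj N (fun z => φ (ell0 z)) y := by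
        cases hφj : φ j with
        | top => rw [EReal.neg_top, EReal.add_bot]; exact bot_le
        | bot =>
          obtain ⟨z, hzj⟩ := exists_ell0_eq hj
          have := hterm_le z
          rw [hzj, hφj, EReal.neg_bot, EReal.coe_add_top] at this
          exact le_trans le_top this
        | coe r =>
          rcases Nat.eq_zero_or_pos j with hj0 | hj1
          · subst hj0
            have hD0 : D 0 = 0 := dualCoord_zero_left hN y
            have := hterm_le 0
            rw [capra_zero, ell0_zero, hφj, ecoe_sub] at this
            rw [hD0, ecoe_sub]
            simpa using this
          · -- use density
            rw [ecoe_sub, hA, EReal.coe_le_coe_iff]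
            by_contra hcon
            push_neg at hcon
            set ε := (D j - r) - (cx - φl) with hε
            have hεpos : 0 < ε := by rw [hε]; linarith
            obtain ⟨z, hzne, hzj, hzgt⟩ := exists_sparse_near hN hj1 hj y hεpos
            have hterm := hterm_le z
            rw [hA, hzj, hφj, capra_ne hzne, ecoe_sub, EReal.coe_le_coe_iff] at hterm
            rw [hε] at hzgt
            rw [hD] at hzgt
            linarith
      calc ((D j : ℝ) : EReal) + (-φ j) ≤ capraConj N (fun z => φ (ell0 z)) y := hgoal
      _ = ((cx - φl : ℝ) : EReal) := hA
      _ = ((D l : ℝ) : EReal) + (-φ l) := by rw [← hDlcx, ← hT, hcx]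
  · -- backwards
    rintro ⟨h1, h2⟩
    -- first : capra N x y = D l
    have hcx0 : 0 ≤ cx := by
      have := h1 0 (coordNorm_zero_left hN l)
      rw [dotp_sub_left, dotp_zero_left, dotp_smul_left, hCeq] at this
      have h4 : (N x)⁻¹ * dotp x y = cx := by rw [hcxval, div_eq_inv_mul]
      rw [h4] at this
      linarith
    have hDle : D l ≤ cx := by
      refine dualCoord_le hN hcx0 fun z hz hzl => ?_
      have hx' := h1 ((N z)⁻¹ • z) (coordNorm_unit_le_one hN hl1 hz hzl)
      rw [dotp_sub_left, dotp_smul_left, dotp_smul_left, hCeq, sub_nonpos] at hx'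
      have h4 : (N x)⁻¹ * dotp x y = cx := by rw [hcxval, div_eq_inv_mul]
      rw [h4] at hx'
      have hNz := N_pos hN hz
      calc dotp z y = N z * ((N z)⁻¹ * dotp z y) := by field_simp
      _ ≤ N z * cx := mul_le_mul_of_nonneg_left hx' (N_nonneg hN z)
      _ = cx * N z := mul_comm _ _
    have hDlcx : cx = D l := le_antisymm hcxle hDle
    rw [hT]
    refine le_antisymm ?_ ?_
    · rw [hconj]
      refine iSup_le fun z => ?_
      have hzd : ell0 z ≤ d := ell0_le_d z
      have hzD : capra N z y ≤ D (ell0 z) := capra_le_dualCoord hN z y le_rfl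
      calc ((capra N z y : ℝ) : EReal) + (-φ (ell0 z))
          ≤ ((D (ell0 z) : ℝ) : EReal) + (-φ (ell0 z)) := by
            refine add_le_add ?_ le_rfl
            exact EReal.coe_le_coe_iff.2 hzD
      _ ≤ ((D l : ℝ) : EReal) + (-φ l) := h2 (ell0 z) hzd
      _ = ((cx - φl : ℝ) : EReal) := by
            rw [hφl, ecoe_sub, hDlcx]
    · have := hterm_le x
      rw [← hldef, hφl, ecoe_sub, ← hcx] at this
      exact this
end
end

section
/- Let ⦀·⦀ be a norm on ℝ^d and let φ : {0,…,d} → [0,∞) satisfy φ(0) = 0 and φ(l) > 0 for all l ∈ {1,…,d}. Then the function ⦀x⦀_φ = inf{ Σ_{l=1}^{d} φ(l) ⦀z^{(l)}⦀_l : z^{(1)},…,z^{(d)} ∈ ℝ^d, Σ_{l=1}^{d} z^{(l)} = x } (the inf-convolution of the norms φ(l)·⦀·⦀_l) is a norm on ℝ^d whose dual norm is ⦀y⦀_{φ,★} = sup_{l ∈ {1,…,d}} ⦀y⦀_{l,★}/φ(l), i.e. has dual unit ball ⋂_{l=1}^{d} φ(l) B_{l,★}; moreover ⦀x⦀_φ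 / ⦀x⦀ ≤ φ(ℓ0(x)) for every x ∈ ℝ^d with x ≠ 0. -/
open scoped BigOperators

noncomputable section

/-- The inf-convolution of the norms `φ(l)·⦀·⦀_l`, `l ∈ {1,…,d}`. -/
def infConv {d : ℕ} (N : (Fin d → ℝ) → ℝ) (φ : ℕ → ℝ) (x : Fin d → ℝ) : ℝ :=
  sInf {r | ∃ z : ℕ → (Fin d → ℝ),
    (∑ l ∈ Finset.Icc 1 d, z l) = x ∧
    r = ∑ l ∈ Finset.Icc 1 d, φ l * coordNorm N l (z l)}

/-- The dual norm of a norm `M`, with respect to the Euclidean pairing. -/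
def dualNorm {d : ℕ} (M : (Fin d → ℝ) → ℝ) (y : Fin d → ℝ) : ℝ :=
  sSup {r | ∃ x : Fin d → ℝ, M x ≤ 1 ∧ r = dotp x y}

section Aux
variable {d : ℕ}

lemma dotp_zero_left (y : Fin d → ℝ) : dotp 0 y = 0 := by simp [dotp]
lemma dotp_zero_right (x : Fin d → ℝ) : dotp x 0 = 0 := by simp [dotp]
lemma dotp_add_left (x x' y : Fin d → ℝ) : dotp (x + x') y = dotp x y + dotp x' y := by
  simp [dotp, add_mul, Finset.sum_add_distrib]
lemma dotp_smul_left (c : ℝ) (x y : Fin d → ℝ) : dotp (c • x) y = c * dotp x y := by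
  simp [dotp, Finset.mul_sum, mul_assoc]
lemma dotp_smul_right (c : ℝ) (x y : Fin d → ℝ) : dotp x (c • y) = c * dotp x y := by
  simp [dotp, Finset.mul_sum, mul_left_comm]
lemma dotp_neg_left (x y : Fin d → ℝ) : dotp (-x) y = - dotp x y := by
  simp [dotp]
lemma dotp_neg_right (x y : Fin d → ℝ) : dotp x (-y) = - dotp x y := by
  simp [dotp]
lemma dotp_single (x : Fin d → ℝ) (i : Fin d) (s : ℝ) :
    dotp x (Pi.single i s) = x i * s := by
  simp [dotp, Pi.single_apply, Finset.sum_ite_eq', mul_comm]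
lemma dotp_single_left (x : Fin d → ℝ) (i : Fin d) (s : ℝ) :
    dotp (Pi.single i s) x = s * x i := by
  simp [dotp, Pi.single_apply, Finset.sum_ite_eq']
lemma projK_neg (K : Finset (Fin d)) (y : Fin d → ℝ) : projK K (-y) = - projK K y := by
  funext i; by_cases hi : i ∈ K <;> simp [projK, hi]
lemma projK_smul (K : Finset (Fin d)) (c : ℝ) (y : Fin d → ℝ) :
    projK K (c • y) = c • projK K y := by
  funext i; by_cases hi : i ∈ K <;> simp [projK, hi]
lemma dotp_projK {K : Finset (Fin d)} {x : Fin d → ℝ} (hx : x ∈ RK K) (y : Fin d → ℝ) :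
    dotp x (projK K y) = dotp x y := by
  unfold dotp projK
  refine Finset.sum_congr rfl fun i _ => ?_
  by_cases hi : i ∈ K
  · simp [hi]
  · simp [hi, hx i hi]
lemma zero_mem_RK (K : Finset (Fin d)) : (0 : Fin d → ℝ) ∈ RK K := fun j _ => rfl
lemma neg_mem_RK {K : Finset (Fin d)} {x : Fin d → ℝ} (hx : x ∈ RK K) : -x ∈ RK K :=
  fun j hj => by simp [hx j hj]
lemma smul_mem_RK {K : Finset (Fin d)} {x : Fin d → ℝ} (hx : x ∈ RK K) (c : ℝ) :
    c • x ∈ RK K := fun j hj => by simp [hx j hj]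

variable {N : (Fin d → ℝ) → ℝ}

lemma IsNorm.zero (hN : IsNorm N) : N 0 = 0 := (hN.eq_zero_iff 0).mpr rfl
lemma IsNorm.neg (hN : IsNorm N) (x : Fin d → ℝ) : N (-x) = N x := by
  have := hN.smul (-1) x; simpa using this
lemma IsNorm.nonneg (hN : IsNorm N) (x : Fin d → ℝ) : 0 ≤ N x := by
  have h := hN.triangle x (-x)
  rw [add_neg_cancel, hN.zero, hN.neg] at h
  linarith
lemma IsNorm.pos (hN : IsNorm N) {x : Fin d → ℝ} (hx : x ≠ 0) : 0 < N x :=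
  lt_of_le_of_ne (hN.nonneg x) fun h => hx ((hN.eq_zero_iff x).mp h.symm)
lemma IsNorm.sum_le (hN : IsNorm N) {ι : Type*} (s : Finset ι) (f : ι → Fin d → ℝ) :
    N (∑ i ∈ s, f i) ≤ ∑ i ∈ s, N (f i) := by
  classical
  induction s using Finset.cons_induction with
  | empty => simp [hN.zero]
  | cons a s ha ih =>
      rw [Finset.sum_cons, Finset.sum_cons]
      exact (hN.triangle _ _).trans (by linarith)

/-- Norm upper bound by sup norm. -/
lemma IsNorm.le_pi_norm (hN : IsNorm N) : ∃ M : ℝ, 0 ≤ M ∧ ∀ x : Fin d → ℝ, N x ≤ M * ‖x‖ := by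
  classical
  refine ⟨∑ i, N (Pi.single i 1), Finset.sum_nonneg fun i _ => hN.nonneg _, fun x => ?_⟩
  have hx : x = ∑ i, Pi.single i (x i) := by
    funext j; simp [Pi.single_apply, Finset.sum_apply]
  calc N x = N (∑ i, Pi.single i (x i)) := by rw [← hx]
    _ ≤ ∑ i, N (Pi.single i (x i)) := hN.sum_le _ _
    _ ≤ ∑ i, N (Pi.single i 1) * ‖x‖ := by
        refine Finset.sum_le_sum fun i _ => ?_
        have hsingle : Pi.single i (x i) = (x i) • (Pi.single i (1:ℝ) : Fin d → ℝ) := by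
          funext j
          by_cases hj : j = i <;> simp [Pi.single_apply, hj]
        rw [hsingle, hN.smul, mul_comm (N (Pi.single i 1)) ‖x‖]
        exact mul_le_mul_of_nonneg_right (norm_le_pi_norm x i) (hN.nonneg _)
    _ = (∑ i, N (Pi.single i 1)) * ‖x‖ := by rw [Finset.sum_mul]

/-- Coordinate lower bound: compactness of the sphere. -/
lemma IsNorm.coord_bound (hN : IsNorm N) : ∃ C : ℝ, 0 < C ∧ ∀ (x : Fin d → ℝ) (i : Fin d), |x i| ≤ C * N x := by
  classical
  rcases Nat.eq_zero_or_pos d with hd | hd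
  · exact ⟨1, one_pos, fun x i => absurd i.2 (by omega)⟩
  obtain ⟨M, hM0, hM⟩ := hN.le_pi_norm
  have hcont : Continuous N := by
    have : LipschitzWith (Real.toNNReal M) N := by
      refine LipschitzWith.of_dist_le_mul fun x y => ?_
      have h1 : N x - N y ≤ N (x - y) := by
        have := hN.triangle (x - y) y; simp at this; linarith
      have h2 : N y - N x ≤ N (x - y) := by
        have := hN.triangle (y - x) x
        simp at this
        have h3 : N (y - x) = N (x - y) := by
          rw [show y - x = -(x - y) by ring, hN.neg]
        linarith
      have : dist (N x) (N y) ≤ N (x - y) := abs_sub_le_iff.mpr ⟨h1, h2⟩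
      refine this.trans ((hM _).trans ?_)
      rw [Real.coe_toNNReal _ hM0, dist_eq_norm]
    exact this.continuous
  have hsph : IsCompact (Metric.sphere (0 : Fin d → ℝ) 1) := isCompact_sphere 0 1
  have hne : (Metric.sphere (0 : Fin d → ℝ) 1).Nonempty := by
    refine ⟨Pi.single ⟨0, hd⟩ 1, ?_⟩
    rw [Metric.mem_sphere, dist_zero_right]
    have : ‖(Pi.single ⟨0, hd⟩ (1:ℝ) : Fin d → ℝ)‖ = ‖(1:ℝ)‖ := Pi.norm_single _
    simpa using this
  obtain ⟨x₀, hx₀S, hx₀⟩ := hsph.exists_isMinOn hne hcont.continuousOn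
  have hx₀ne : x₀ ≠ 0 := by
    intro h
    rw [Metric.mem_sphere, dist_zero_right, h] at hx₀S
    simp at hx₀S
  have hm : 0 < N x₀ := hN.pos hx₀ne
  refine ⟨(N x₀)⁻¹, inv_pos.mpr hm, fun x i => ?_⟩
  rcases eq_or_ne x 0 with rfl | hx
  · simp [hN.zero]
  have hxn : (0:ℝ) < ‖x‖ := norm_pos_iff.mpr hx
  have hmem : ‖x‖⁻¹ • x ∈ Metric.sphere (0 : Fin d → ℝ) 1 := by
    simp [Metric.mem_sphere, dist_zero_right, norm_smul, abs_of_pos (inv_pos.mpr hxn),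
      inv_mul_cancel₀ hxn.ne']
  have h2 : N x₀ ≤ N (‖x‖⁻¹ • x) := hx₀ hmem
  rw [hN.smul, abs_of_pos (inv_pos.mpr hxn)] at h2
  have hkey : N x₀ * ‖x‖ ≤ N x := by
    rw [mul_comm, ← le_inv_mul_iff₀ hxn]
    exact h2
  have : ‖x‖ ≤ (N x₀)⁻¹ * N x := by
    rw [le_inv_mul_iff₀ hm]; linarith
  exact (norm_le_pi_norm x i).trans this

end Aux

section Aux2
variable {d : ℕ}

lemma csSup_mul_image {S : Set ℝ} {c : ℝ} (hc : 0 < c) (hne : S.Nonempty) (hb : BddAbove S) :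
    sSup ((fun r => c * r) '' S) = c * sSup S := by
  obtain ⟨B, hB⟩ := hb
  have hbim : BddAbove ((fun r => c * r) '' S) := by
    refine ⟨c * B, ?_⟩
    rintro r ⟨s, hs, rfl⟩
    exact mul_le_mul_of_nonneg_left (hB hs) hc.le
  apply le_antisymm
  · refine csSup_le (hne.image _) ?_
    rintro r ⟨s, hs, rfl⟩
    exact mul_le_mul_of_nonneg_left (le_csSup ⟨B, hB⟩ hs) hc.le
  · rw [mul_comm, ← le_div_iff₀ hc]
    refine csSup_le hne fun s hs => ?_
    rw [le_div_iff₀ hc, mul_comm]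
    exact le_csSup hbim ⟨s, hs, rfl⟩

lemma csInf_mul_image {S : Set ℝ} {c : ℝ} (hc : 0 < c) (hne : S.Nonempty) (hb : BddBelow S) :
    sInf ((fun r => c * r) '' S) = c * sInf S := by
  obtain ⟨B, hB⟩ := hb
  have hbim : BddBelow ((fun r => c * r) '' S) := by
    refine ⟨c * B, ?_⟩
    rintro r ⟨s, hs, rfl⟩
    exact mul_le_mul_of_nonneg_left (hB hs) hc.le
  apply le_antisymm
  · rw [mul_comm, ← div_le_iff₀ hc]
    refine le_csInf hne fun s hs => ?_
    rw [div_le_iff₀ hc, mul_comm]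
    exact csInf_le hbim ⟨s, hs, rfl⟩
  · refine le_csInf (hne.image _) ?_
    rintro r ⟨s, hs, rfl⟩
    exact mul_le_mul_of_nonneg_left (csInf_le ⟨B, hB⟩ hs) hc.le

variable {N : (Fin d → ℝ) → ℝ} {C : ℝ}

/-! ### restStar -/

lemma zero_mem_restStar_set (hN : IsNorm N) (K : Finset (Fin d)) (y : Fin d → ℝ) :
    (0:ℝ) ∈ {r | ∃ x ∈ RK K, N x ≤ 1 ∧ r = dotp x y} :=
  ⟨0, zero_mem_RK K, by rw [hN.zero]; exact zero_le_one, (dotp_zero_left y).symm⟩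

lemma dotp_le_of_bound (hCb : ∀ (x : Fin d → ℝ) (i : Fin d), |x i| ≤ C * N x)
    {x : Fin d → ℝ} (hx1 : N x ≤ 1) (hC0 : 0 ≤ C) (y : Fin d → ℝ) :
    dotp x y ≤ C * ∑ i, |y i| := by
  calc dotp x y ≤ ∑ i, |x i * y i| := Finset.sum_le_sum fun i _ => le_abs_self _
    _ ≤ ∑ i, C * |y i| := by
        refine Finset.sum_le_sum fun i _ => ?_
        rw [abs_mul]
        have h1 : |x i| ≤ C := (hCb x i).trans (by
          calc C * N x ≤ C * 1 := mul_le_mul_of_nonneg_left hx1 hC0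
            _ = C := mul_one C)
        exact mul_le_mul_of_nonneg_right h1 (abs_nonneg _)
    _ = C * ∑ i, |y i| := by rw [Finset.mul_sum]

lemma restStar_bddAbove (hC0 : 0 < C) (hCb : ∀ (x : Fin d → ℝ) (i : Fin d), |x i| ≤ C * N x)
    (K : Finset (Fin d)) (y : Fin d → ℝ) :
    BddAbove {r | ∃ x ∈ RK K, N x ≤ 1 ∧ r = dotp x y} := by
  refine ⟨C * ∑ i, |y i|, ?_⟩
  rintro r ⟨x, _, hx1, rfl⟩
  exact dotp_le_of_bound hCb hx1 hC0.le y

lemma dotp_le_restStar (hC0 : 0 < C) (hCb : ∀ (x : Fin d → ℝ) (i : Fin d), |x i| ≤ C * N x)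
    {K : Finset (Fin d)} {x : Fin d → ℝ} (hx : x ∈ RK K) (hx1 : N x ≤ 1) (y : Fin d → ℝ) :
    dotp x y ≤ restStar N K y :=
  le_csSup (restStar_bddAbove hC0 hCb K y) ⟨x, hx, hx1, rfl⟩

lemma restStar_nonneg (hN : IsNorm N) (hC0 : 0 < C)
    (hCb : ∀ (x : Fin d → ℝ) (i : Fin d), |x i| ≤ C * N x)
    (K : Finset (Fin d)) (y : Fin d → ℝ) : 0 ≤ restStar N K y :=
  le_csSup (restStar_bddAbove hC0 hCb K y) (zero_mem_restStar_set hN K y)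

lemma restStar_le (hN : IsNorm N) {K : Finset (Fin d)} {y : Fin d → ℝ} {B : ℝ}
    (h : ∀ x ∈ RK K, N x ≤ 1 → dotp x y ≤ B) : restStar N K y ≤ B := by
  refine csSup_le ⟨0, zero_mem_restStar_set hN K y⟩ ?_
  rintro r ⟨x, hx, hx1, rfl⟩
  exact h x hx hx1

lemma restStar_le_const (hN : IsNorm N) (hC0 : 0 < C)
    (hCb : ∀ (x : Fin d → ℝ) (i : Fin d), |x i| ≤ C * N x)
    (K : Finset (Fin d)) (y : Fin d → ℝ) : restStar N K y ≤ C * ∑ i, |y i| :=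
  restStar_le hN fun x _ hx1 => dotp_le_of_bound hCb hx1 hC0.le y

lemma restStar_zero (hN : IsNorm N) (K : Finset (Fin d)) : restStar N K 0 = 0 := by
  unfold restStar
  have : {r | ∃ x ∈ RK K, N x ≤ 1 ∧ r = dotp x (0 : Fin d → ℝ)} = {0} := by
    ext r
    constructor
    · rintro ⟨x, _, _, rfl⟩; simp [dotp_zero_right]
    · rintro rfl; exact zero_mem_restStar_set hN K 0
  rw [this, csSup_singleton]

lemma restStar_neg (hN : IsNorm N) (K : Finset (Fin d)) (y : Fin d → ℝ) :
    restStar N K (-y) = restStar N K y := by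
  unfold restStar
  congr 1
  ext r
  constructor
  · rintro ⟨x, hx, hx1, rfl⟩
    exact ⟨-x, neg_mem_RK hx, by rw [hN.neg]; exact hx1,
      by simp [dotp_neg_left, dotp_neg_right]⟩
  · rintro ⟨x, hx, hx1, rfl⟩
    exact ⟨-x, neg_mem_RK hx, by rw [hN.neg]; exact hx1,
      by simp [dotp_neg_left, dotp_neg_right]⟩

lemma restStar_smul_pos (hN : IsNorm N) (hC0 : 0 < C)
    (hCb : ∀ (x : Fin d → ℝ) (i : Fin d), |x i| ≤ C * N x)
    (K : Finset (Fin d)) {c : ℝ} (hc : 0 < c) (y : Fin d → ℝ) :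
    restStar N K (c • y) = c * restStar N K y := by
  unfold restStar
  have hset : {r | ∃ x ∈ RK K, N x ≤ 1 ∧ r = dotp x (c • y)}
      = (fun r => c * r) '' {r | ∃ x ∈ RK K, N x ≤ 1 ∧ r = dotp x y} := by
    ext r
    constructor
    · rintro ⟨x, hx, hx1, rfl⟩
      exact ⟨dotp x y, ⟨x, hx, hx1, rfl⟩, (dotp_smul_right c x y).symm⟩
    · rintro ⟨s, ⟨x, hx, hx1, rfl⟩, rfl⟩
      exact ⟨x, hx, hx1, (dotp_smul_right c x y).symm⟩
  rw [hset, csSup_mul_image hc ⟨0, zero_mem_restStar_set hN K y⟩ (restStar_bddAbove hC0 hCb K y)]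

/-! ### dualCoord -/

lemma projK_zero (K : Finset (Fin d)) : projK K (0 : Fin d → ℝ) = 0 := by
  funext i; by_cases hi : i ∈ K <;> simp [projK, hi]

lemma zero_mem_dualCoord_set (hN : IsNorm N) (k : ℕ) (y : Fin d → ℝ) :
    (0:ℝ) ∈ {r | ∃ K : Finset (Fin d), K.card ≤ k ∧ r = restStar N K (projK K y)} := by
  refine ⟨∅, by simp, ?_⟩
  have : projK (∅ : Finset (Fin d)) y = 0 := by funext i; simp [projK]
  rw [this, restStar_zero hN]

lemma abs_projK_le (K : Finset (Fin d)) (y : Fin d → ℝ) (i : Fin d) :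
    |projK K y i| ≤ |y i| := by
  by_cases hi : i ∈ K <;> simp [projK, hi, abs_nonneg]

lemma dualCoord_bddAbove (hN : IsNorm N) (hC0 : 0 < C)
    (hCb : ∀ (x : Fin d → ℝ) (i : Fin d), |x i| ≤ C * N x) (k : ℕ) (y : Fin d → ℝ) :
    BddAbove {r | ∃ K : Finset (Fin d), K.card ≤ k ∧ r = restStar N K (projK K y)} := by
  refine ⟨C * ∑ i, |y i|, ?_⟩
  rintro r ⟨K, _, rfl⟩
  refine (restStar_le_const hN hC0 hCb K _).trans ?_
  exact mul_le_mul_of_nonneg_left (Finset.sum_le_sum fun i _ => abs_projK_le K y i) hC0.le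

lemma dualCoord_nonneg (hN : IsNorm N) (hC0 : 0 < C)
    (hCb : ∀ (x : Fin d → ℝ) (i : Fin d), |x i| ≤ C * N x) (k : ℕ) (y : Fin d → ℝ) :
    0 ≤ dualCoord N k y :=
  le_csSup (dualCoord_bddAbove hN hC0 hCb k y) (zero_mem_dualCoord_set hN k y)

lemma restStar_le_dualCoord (hN : IsNorm N) (hC0 : 0 < C)
    (hCb : ∀ (x : Fin d → ℝ) (i : Fin d), |x i| ≤ C * N x) {k : ℕ} {K : Finset (Fin d)}
    (hK : K.card ≤ k) (y : Fin d → ℝ) :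
    restStar N K (projK K y) ≤ dualCoord N k y :=
  le_csSup (dualCoord_bddAbove hN hC0 hCb k y) ⟨K, hK, rfl⟩

lemma dualCoord_le (hN : IsNorm N) {k : ℕ} {y : Fin d → ℝ} {B : ℝ}
    (h : ∀ K : Finset (Fin d), K.card ≤ k → restStar N K (projK K y) ≤ B) :
    dualCoord N k y ≤ B := by
  refine csSup_le ⟨0, zero_mem_dualCoord_set hN k y⟩ ?_
  rintro r ⟨K, hK, rfl⟩
  exact h K hK

lemma dualCoord_zero (hN : IsNorm N) (k : ℕ) : dualCoord N k (0 : Fin d → ℝ) = 0 := by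
  unfold dualCoord
  have : {r | ∃ K : Finset (Fin d), K.card ≤ k ∧ r = restStar N K (projK K (0 : Fin d → ℝ))}
      = {0} := by
    ext r
    constructor
    · rintro ⟨K, _, rfl⟩
      simp [projK_zero, restStar_zero hN]
    · rintro rfl
      exact zero_mem_dualCoord_set hN k 0
  rw [this, csSup_singleton]

lemma dualCoord_neg (hN : IsNorm N) (k : ℕ) (y : Fin d → ℝ) :
    dualCoord N k (-y) = dualCoord N k y := by
  unfold dualCoord
  congr 1
  ext r
  constructor
  · rintro ⟨K, hK, rfl⟩
    exact ⟨K, hK, by rw [projK_neg, restStar_neg hN]⟩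
  · rintro ⟨K, hK, rfl⟩
    exact ⟨K, hK, by rw [projK_neg, restStar_neg hN]⟩

lemma dualCoord_smul_pos (hN : IsNorm N) (hC0 : 0 < C)
    (hCb : ∀ (x : Fin d → ℝ) (i : Fin d), |x i| ≤ C * N x) (k : ℕ) {c : ℝ} (hc : 0 < c)
    (y : Fin d → ℝ) : dualCoord N k (c • y) = c * dualCoord N k y := by
  unfold dualCoord
  have hset : {r | ∃ K : Finset (Fin d), K.card ≤ k ∧ r = restStar N K (projK K (c • y))}
      = (fun r => c * r) '' {r | ∃ K : Finset (Fin d), K.card ≤ k ∧ r = restStar N K (projK K y)} := by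
    ext r
    constructor
    · rintro ⟨K, hK, rfl⟩
      exact ⟨restStar N K (projK K y), ⟨K, hK, rfl⟩,
        by rw [projK_smul, restStar_smul_pos hN hC0 hCb K hc]⟩
    · rintro ⟨s, ⟨K, hK, rfl⟩, rfl⟩
      exact ⟨K, hK, by rw [projK_smul, restStar_smul_pos hN hC0 hCb K hc]⟩
  rw [hset, csSup_mul_image hc ⟨0, zero_mem_dualCoord_set hN k y⟩
    (dualCoord_bddAbove hN hC0 hCb k y)]

lemma abs_le_dualCoord (hN : IsNorm N) (hC0 : 0 < C)
    (hCb : ∀ (x : Fin d → ℝ) (i : Fin d), |x i| ≤ C * N x) {k : ℕ} (hk : 1 ≤ k)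
    (y : Fin d → ℝ) (i : Fin d) :
    |y i| ≤ N (Pi.single i 1) * dualCoord N k y := by
  set ni := N (Pi.single i (1:ℝ)) with hni
  have hipos : 0 < ni := hN.pos (by
    intro h
    have := congrFun h i
    simp at this)
  set s : ℝ := if 0 ≤ y i then 1 else -1 with hs
  set x₀ : Fin d → ℝ := (s / ni) • (Pi.single i (1:ℝ) : Fin d → ℝ) with hx₀
  have hx₀RK : x₀ ∈ RK {i} := by
    intro j hj
    simp only [Finset.mem_singleton] at hj
    simp [hx₀, Pi.single_apply, hj]
  have hNx₀ : N x₀ = 1 := by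
    rw [hx₀, hN.smul, ← hni, abs_div]
    have : |s| = 1 := by rw [hs]; split <;> simp
    rw [this, abs_of_pos hipos]
    field_simp
  have hdot : dotp x₀ y = |y i| / ni := by
    rw [hx₀, dotp_smul_left, dotp_single_left]
    have : s * y i = |y i| := by
      rw [hs]; split
      · rw [one_mul, abs_of_nonneg (by assumption)]
      · rw [abs_of_neg (by linarith [not_le.mp (by assumption)]), neg_one_mul]
    rw [one_mul, div_mul_eq_mul_div, this]
  have h1 : dotp x₀ y ≤ dualCoord N k y := by
    have h2 : dotp x₀ (projK {i} y) = dotp x₀ y := dotp_projK hx₀RK y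
    calc dotp x₀ y = dotp x₀ (projK {i} y) := h2.symm
      _ ≤ restStar N {i} (projK {i} y) :=
          dotp_le_restStar hC0 hCb hx₀RK (le_of_eq hNx₀) _
      _ ≤ dualCoord N k y := restStar_le_dualCoord hN hC0 hCb (by simpa using hk) _
  rw [hdot] at h1
  have h2 := mul_le_mul_of_nonneg_left h1 hipos.le
  have h3 : ni * (|y i| / ni) = |y i| := by field_simp
  rwa [h3] at h2

end Aux2

section Aux3
variable {d : ℕ} {N : (Fin d → ℝ) → ℝ} {C : ℝ}

lemma zero_mem_coordNorm_set (hN : IsNorm N) (l : ℕ) (x : Fin d → ℝ) :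
    (0:ℝ) ∈ {r | ∃ y : Fin d → ℝ, dualCoord N l y ≤ 1 ∧ r = dotp x y} :=
  ⟨0, by rw [dualCoord_zero hN]; exact zero_le_one, (dotp_zero_right x).symm⟩

lemma coordNorm_bddAbove (hN : IsNorm N) (hC0 : 0 < C)
    (hCb : ∀ (x : Fin d → ℝ) (i : Fin d), |x i| ≤ C * N x) {l : ℕ} (hl : 1 ≤ l)
    (x : Fin d → ℝ) :
    BddAbove {r | ∃ y : Fin d → ℝ, dualCoord N l y ≤ 1 ∧ r = dotp x y} := by
  refine ⟨∑ i, |x i| * N (Pi.single i 1), ?_⟩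
  rintro r ⟨y, hy, rfl⟩
  calc dotp x y ≤ ∑ i, |x i * y i| := Finset.sum_le_sum fun i _ => le_abs_self _
    _ ≤ ∑ i, |x i| * N (Pi.single i 1) := by
        refine Finset.sum_le_sum fun i _ => ?_
        rw [abs_mul]
        refine mul_le_mul_of_nonneg_left ?_ (abs_nonneg _)
        have := abs_le_dualCoord hN hC0 hCb hl y i
        calc |y i| ≤ N (Pi.single i 1) * dualCoord N l y := this
          _ ≤ N (Pi.single i 1) * 1 := mul_le_mul_of_nonneg_left hy (hN.nonneg _)
          _ = N (Pi.single i 1) := mul_one _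

lemma dotp_le_coordNorm (hN : IsNorm N) (hC0 : 0 < C)
    (hCb : ∀ (x : Fin d → ℝ) (i : Fin d), |x i| ≤ C * N x) {l : ℕ} (hl : 1 ≤ l)
    {y : Fin d → ℝ} (hy : dualCoord N l y ≤ 1) (x : Fin d → ℝ) :
    dotp x y ≤ coordNorm N l x :=
  le_csSup (coordNorm_bddAbove hN hC0 hCb hl x) ⟨y, hy, rfl⟩

lemma coordNorm_nonneg (hN : IsNorm N) (hC0 : 0 < C)
    (hCb : ∀ (x : Fin d → ℝ) (i : Fin d), |x i| ≤ C * N x) {l : ℕ} (hl : 1 ≤ l)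
    (x : Fin d → ℝ) : 0 ≤ coordNorm N l x :=
  le_csSup (coordNorm_bddAbove hN hC0 hCb hl x) (zero_mem_coordNorm_set hN l x)

lemma coordNorm_le (hN : IsNorm N) {l : ℕ} {x : Fin d → ℝ} {B : ℝ}
    (h : ∀ y : Fin d → ℝ, dualCoord N l y ≤ 1 → dotp x y ≤ B) : coordNorm N l x ≤ B := by
  refine csSup_le ⟨0, zero_mem_coordNorm_set hN l x⟩ ?_
  rintro r ⟨y, hy, rfl⟩
  exact h y hy

lemma coordNorm_zero (hN : IsNorm N) (l : ℕ) : coordNorm N l (0 : Fin d → ℝ) = 0 := by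
  unfold coordNorm
  have : {r | ∃ y : Fin d → ℝ, dualCoord N l y ≤ 1 ∧ r = dotp (0 : Fin d → ℝ) y} = {0} := by
    ext r
    constructor
    · rintro ⟨y, _, rfl⟩; simp [dotp_zero_left]
    · rintro rfl; exact zero_mem_coordNorm_set hN l 0
  rw [this, csSup_singleton]

lemma coordNorm_add_le (hN : IsNorm N) (hC0 : 0 < C)
    (hCb : ∀ (x : Fin d → ℝ) (i : Fin d), |x i| ≤ C * N x) {l : ℕ} (hl : 1 ≤ l)
    (x x' : Fin d → ℝ) :
    coordNorm N l (x + x') ≤ coordNorm N l x + coordNorm N l x' := by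
  refine coordNorm_le hN fun y hy => ?_
  rw [dotp_add_left]
  exact add_le_add (dotp_le_coordNorm hN hC0 hCb hl hy x) (dotp_le_coordNorm hN hC0 hCb hl hy x')

lemma coordNorm_neg (hN : IsNorm N) (l : ℕ) (x : Fin d → ℝ) :
    coordNorm N l (-x) = coordNorm N l x := by
  unfold coordNorm
  congr 1
  ext r
  constructor
  · rintro ⟨y, hy, rfl⟩
    exact ⟨-y, by rwa [dualCoord_neg hN], by simp [dotp_neg_left, dotp_neg_right]⟩
  · rintro ⟨y, hy, rfl⟩
    exact ⟨-y, by rwa [dualCoord_neg hN], by simp [dotp_neg_left, dotp_neg_right]⟩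

lemma coordNorm_smul (hN : IsNorm N) (hC0 : 0 < C)
    (hCb : ∀ (x : Fin d → ℝ) (i : Fin d), |x i| ≤ C * N x) {l : ℕ} (hl : 1 ≤ l)
    (c : ℝ) (x : Fin d → ℝ) : coordNorm N l (c • x) = |c| * coordNorm N l x := by
  have key : ∀ (c' : ℝ), 0 < c' → ∀ x' : Fin d → ℝ,
      coordNorm N l (c' • x') = c' * coordNorm N l x' := by
    intro c' hc' x'
    unfold coordNorm
    have hset : {r | ∃ y : Fin d → ℝ, dualCoord N l y ≤ 1 ∧ r = dotp (c' • x') y}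
        = (fun r => c' * r) '' {r | ∃ y : Fin d → ℝ, dualCoord N l y ≤ 1 ∧ r = dotp x' y} := by
      ext r
      constructor
      · rintro ⟨y, hy, rfl⟩
        exact ⟨dotp x' y, ⟨y, hy, rfl⟩, (dotp_smul_left c' x' y).symm⟩
      · rintro ⟨s, ⟨y, hy, rfl⟩, rfl⟩
        exact ⟨y, hy, (dotp_smul_left c' x' y).symm⟩
    rw [hset, csSup_mul_image hc' ⟨0, zero_mem_coordNorm_set hN l x'⟩
      (coordNorm_bddAbove hN hC0 hCb hl x')]
  rcases lt_trichotomy c 0 with hc | hc | hc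
  · have : c • x = (-c) • (-x) := by funext i; simp
    rw [this, key (-c) (by linarith) (-x), coordNorm_neg hN, abs_of_neg hc]
  · subst hc; simp [coordNorm_zero hN]
  · rw [key c hc x, abs_of_pos hc]

lemma abs_le_coordNorm (hN : IsNorm N) (hC0 : 0 < C)
    (hCb : ∀ (x : Fin d → ℝ) (i : Fin d), |x i| ≤ C * N x) {l : ℕ} (hl : 1 ≤ l)
    (z : Fin d → ℝ) (i : Fin d) : |z i| ≤ C * coordNorm N l z := by
  set s : ℝ := if 0 ≤ z i then 1 else -1 with hs
  set y : Fin d → ℝ := Pi.single i (s / C) with hy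
  have habs : |s / C| = 1 / C := by
    rw [abs_div, abs_of_pos hC0]
    congr 1
    rw [hs]; split <;> simp
  have hyd : dualCoord N l y ≤ 1 := by
    refine dualCoord_le hN fun K _ => ?_
    refine restStar_le hN fun x hx hx1 => ?_
    have hval : dotp x (projK K y) = if i ∈ K then x i * (s / C) else 0 := by
      unfold dotp projK
      rw [hy]
      by_cases hiK : i ∈ K
      · simp only [hiK, if_true]
        rw [Finset.sum_eq_single i]
        · simp [hiK]
        · intro j _ hj
          by_cases hjK : j ∈ K <;> simp [Pi.single_apply, hj, hjK]
        · intro h; exact absurd (Finset.mem_univ i) h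
      · simp only [hiK, if_false]
        refine Finset.sum_eq_zero fun j _ => ?_
        by_cases hjK : j ∈ K
        · have hji : j ≠ i := fun h => hiK (h ▸ hjK)
          simp [Pi.single_apply, hji, hjK]
        · simp [hjK]
    rw [hval]
    split
    · calc x i * (s / C) ≤ |x i * (s / C)| := le_abs_self _
        _ = |x i| * (1 / C) := by rw [abs_mul, habs]
        _ ≤ (C * N x) * (1 / C) := mul_le_mul_of_nonneg_right (hCb x i) (by positivity)
        _ = N x := by field_simp
        _ ≤ 1 := hx1
    · exact zero_le_one
  have hdot : dotp z y = |z i| / C := by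
    rw [hy, dotp_single]
    have hsz : z i * s = |z i| := by
      rw [hs]; split
      · rw [mul_one, abs_of_nonneg (by assumption)]
      · rw [abs_of_neg (by linarith [not_le.mp (by assumption)])]; ring
    rw [← mul_div_assoc, hsz]
  have h1 : |z i| / C ≤ coordNorm N l z := by
    rw [← hdot]; exact dotp_le_coordNorm hN hC0 hCb hl hyd z
  have h2 := mul_le_mul_of_nonneg_left h1 hC0.le
  have h3 : C * (|z i| / C) = |z i| := by field_simp
  rwa [h3] at h2

/-- Cauchy–Schwarz for the coordinate-k norm. -/
lemma dotp_le_coordNorm_mul (hN : IsNorm N) (hC0 : 0 < C)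
    (hCb : ∀ (x : Fin d → ℝ) (i : Fin d), |x i| ≤ C * N x) {l : ℕ} (hl : 1 ≤ l)
    (x y : Fin d → ℝ) : dotp x y ≤ coordNorm N l x * dualCoord N l y := by
  set t := dualCoord N l y with ht
  have ht0 : 0 ≤ t := dualCoord_nonneg hN hC0 hCb l y
  rcases eq_or_lt_of_le ht0 with h0 | hpos
  · have hy0 : y = 0 := by
      funext i
      have := abs_le_dualCoord hN hC0 hCb hl y i
      rw [← ht, ← h0, mul_zero] at this
      exact abs_eq_zero.mp (le_antisymm this (abs_nonneg _))
    rw [hy0, dotp_zero_right, ← h0, mul_zero]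
  · have hd : dualCoord N l (t⁻¹ • y) ≤ 1 := by
      rw [dualCoord_smul_pos hN hC0 hCb l (inv_pos.mpr hpos), ← ht, inv_mul_cancel₀ hpos.ne']
    have := dotp_le_coordNorm hN hC0 hCb hl hd x
    rw [dotp_smul_right] at this
    calc dotp x y = t * (t⁻¹ * dotp x y) := by field_simp
      _ ≤ t * coordNorm N l x := mul_le_mul_of_nonneg_left this hpos.le
      _ = coordNorm N l x * t := mul_comm _ _

/-- If `x` is supported in `K` with `|K| ≤ l` then `coordNorm N l x ≤ N x`. -/
lemma coordNorm_le_N (hN : IsNorm N) (hC0 : 0 < C)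
    (hCb : ∀ (x : Fin d → ℝ) (i : Fin d), |x i| ≤ C * N x) {l : ℕ} {K : Finset (Fin d)}
    (hK : K.card ≤ l) {x : Fin d → ℝ} (hx : x ∈ RK K) :
    coordNorm N l x ≤ N x := by
  refine coordNorm_le hN fun y hy => ?_
  rcases eq_or_ne x 0 with rfl | hx0
  · rw [dotp_zero_left, hN.zero]
  · have hNx : 0 < N x := hN.pos hx0
    have hx' : (N x)⁻¹ • x ∈ RK K := smul_mem_RK hx _
    have hNx' : N ((N x)⁻¹ • x) ≤ 1 := by
      rw [hN.smul, abs_of_pos (inv_pos.mpr hNx), inv_mul_cancel₀ hNx.ne']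
    have h1 : dotp ((N x)⁻¹ • x) (projK K y) ≤ restStar N K (projK K y) :=
      dotp_le_restStar hC0 hCb hx' hNx' _
    rw [dotp_projK hx', dotp_smul_left] at h1
    have h2 : restStar N K (projK K y) ≤ dualCoord N l y :=
      restStar_le_dualCoord hN hC0 hCb hK y
    have h3 : (N x)⁻¹ * dotp x y ≤ 1 := le_trans h1 (le_trans h2 hy)
    calc dotp x y = N x * ((N x)⁻¹ * dotp x y) := by field_simp
      _ ≤ N x * 1 := mul_le_mul_of_nonneg_left h3 hNx.le
      _ = N x := mul_one _

end Aux3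

section Aux4
variable {d : ℕ} {N : (Fin d → ℝ) → ℝ} {C : ℝ} {φ : ℕ → ℝ}

lemma mem_infConv_single (hN : IsNorm N) {l : ℕ} (hl1 : 1 ≤ l) (hld : l ≤ d)
    (x : Fin d → ℝ) :
    φ l * coordNorm N l x ∈ {r | ∃ z : ℕ → (Fin d → ℝ),
      (∑ m ∈ Finset.Icc 1 d, z m) = x ∧
      r = ∑ m ∈ Finset.Icc 1 d, φ m * coordNorm N m (z m)} := by
  classical
  refine ⟨fun m => if m = l then x else 0, ?_, ?_⟩
  · rw [Finset.sum_ite_eq' (Finset.Icc 1 d) l fun _ => x]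
    simp [Finset.mem_Icc, hl1, hld]
  · rw [Finset.sum_eq_single l]
    · simp
    · intro m _ hm; simp [hm, coordNorm_zero hN]
    · intro h; exact absurd (Finset.mem_Icc.mpr ⟨hl1, hld⟩) h

lemma infConv_set_nonempty (hN : IsNorm N) (x : Fin d → ℝ) :
    {r | ∃ z : ℕ → (Fin d → ℝ),
      (∑ m ∈ Finset.Icc 1 d, z m) = x ∧
      r = ∑ m ∈ Finset.Icc 1 d, φ m * coordNorm N m (z m)}.Nonempty := by
  rcases Nat.eq_zero_or_pos d with hd | hd
  · refine ⟨0, fun _ => 0, ?_, ?_⟩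
    · subst hd
      funext i; exact absurd i.2 (by omega)
    · subst hd; simp
  · exact ⟨_, mem_infConv_single hN le_rfl hd x⟩

lemma infConv_set_nonneg (hN : IsNorm N) (hC0 : 0 < C)
    (hCb : ∀ (x : Fin d → ℝ) (i : Fin d), |x i| ≤ C * N x)
    (hφpos : ∀ l : ℕ, 1 ≤ l → l ≤ d → 0 < φ l) (x : Fin d → ℝ) {r : ℝ}
    (hr : r ∈ {r | ∃ z : ℕ → (Fin d → ℝ),
      (∑ m ∈ Finset.Icc 1 d, z m) = x ∧
      r = ∑ m ∈ Finset.Icc 1 d, φ m * coordNorm N m (z m)}) : 0 ≤ r := by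
  obtain ⟨z, _, rfl⟩ := hr
  refine Finset.sum_nonneg fun l hl => ?_
  rw [Finset.mem_Icc] at hl
  exact mul_nonneg (hφpos l hl.1 hl.2).le (coordNorm_nonneg hN hC0 hCb hl.1 _)

lemma infConv_bddBelow (hN : IsNorm N) (hC0 : 0 < C)
    (hCb : ∀ (x : Fin d → ℝ) (i : Fin d), |x i| ≤ C * N x)
    (hφpos : ∀ l : ℕ, 1 ≤ l → l ≤ d → 0 < φ l) (x : Fin d → ℝ) :
    BddBelow {r | ∃ z : ℕ → (Fin d → ℝ),
      (∑ m ∈ Finset.Icc 1 d, z m) = x ∧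
      r = ∑ m ∈ Finset.Icc 1 d, φ m * coordNorm N m (z m)} :=
  ⟨0, fun _ hr => infConv_set_nonneg hN hC0 hCb hφpos x hr⟩

lemma infConv_nonneg (hN : IsNorm N) (hC0 : 0 < C)
    (hCb : ∀ (x : Fin d → ℝ) (i : Fin d), |x i| ≤ C * N x)
    (hφpos : ∀ l : ℕ, 1 ≤ l → l ≤ d → 0 < φ l) (x : Fin d → ℝ) :
    0 ≤ infConv N φ x :=
  le_csInf (infConv_set_nonempty hN x) fun _ hr => infConv_set_nonneg hN hC0 hCb hφpos x hr

lemma infConv_le_single (hN : IsNorm N) (hC0 : 0 < C)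
    (hCb : ∀ (x : Fin d → ℝ) (i : Fin d), |x i| ≤ C * N x)
    (hφpos : ∀ l : ℕ, 1 ≤ l → l ≤ d → 0 < φ l) {l : ℕ} (hl1 : 1 ≤ l) (hld : l ≤ d)
    (x : Fin d → ℝ) : infConv N φ x ≤ φ l * coordNorm N l x :=
  csInf_le (infConv_bddBelow hN hC0 hCb hφpos x) (mem_infConv_single hN hl1 hld x)

lemma infConv_zero (hN : IsNorm N) (hC0 : 0 < C)
    (hCb : ∀ (x : Fin d → ℝ) (i : Fin d), |x i| ≤ C * N x)
    (hφpos : ∀ l : ℕ, 1 ≤ l → l ≤ d → 0 < φ l) : infConv N φ (0 : Fin d → ℝ) = 0 := by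
  refine le_antisymm ?_ (infConv_nonneg hN hC0 hCb hφpos 0)
  refine csInf_le (infConv_bddBelow hN hC0 hCb hφpos 0) ⟨fun _ => 0, by simp, ?_⟩
  simp [coordNorm_zero hN]

lemma infConv_triangle (hN : IsNorm N) (hC0 : 0 < C)
    (hCb : ∀ (x : Fin d → ℝ) (i : Fin d), |x i| ≤ C * N x)
    (hφpos : ∀ l : ℕ, 1 ≤ l → l ≤ d → 0 < φ l) (x y : Fin d → ℝ) :
    infConv N φ (x + y) ≤ infConv N φ x + infConv N φ y := by
  have key : ∀ r ∈ {r | ∃ z : ℕ → (Fin d → ℝ),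
      (∑ m ∈ Finset.Icc 1 d, z m) = x ∧
      r = ∑ m ∈ Finset.Icc 1 d, φ m * coordNorm N m (z m)},
      ∀ t ∈ {r | ∃ z : ℕ → (Fin d → ℝ),
      (∑ m ∈ Finset.Icc 1 d, z m) = y ∧
      r = ∑ m ∈ Finset.Icc 1 d, φ m * coordNorm N m (z m)},
      infConv N φ (x + y) ≤ r + t := by
    rintro r ⟨z, hz, rfl⟩ t ⟨w, hw, rfl⟩
    have hmem : (∑ m ∈ Finset.Icc 1 d, φ m * coordNorm N m (z m + w m)) ∈
        {r | ∃ u : ℕ → (Fin d → ℝ),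
          (∑ m ∈ Finset.Icc 1 d, u m) = x + y ∧
          r = ∑ m ∈ Finset.Icc 1 d, φ m * coordNorm N m (u m)} := by
      refine ⟨fun m => z m + w m, ?_, rfl⟩
      rw [Finset.sum_add_distrib, hz, hw]
    refine (csInf_le (infConv_bddBelow hN hC0 hCb hφpos (x + y)) hmem).trans ?_
    rw [← Finset.sum_add_distrib]
    refine Finset.sum_le_sum fun l hl => ?_
    rw [Finset.mem_Icc] at hl
    rw [← mul_add]
    exact mul_le_mul_of_nonneg_left (coordNorm_add_le hN hC0 hCb hl.1 _ _) (hφpos l hl.1 hl.2).le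
  have h2 : infConv N φ (x + y) - infConv N φ x ≤ infConv N φ y := by
    refine le_csInf (infConv_set_nonempty hN y) fun t ht => ?_
    have h3 : infConv N φ (x + y) - t ≤ infConv N φ x :=
      le_csInf (infConv_set_nonempty hN x) fun r hr => by linarith [key r hr t ht]
    linarith
  linarith

lemma infConv_neg (hN : IsNorm N) (x : Fin d → ℝ) :
    infConv N φ (-x) = infConv N φ x := by
  unfold infConv
  congr 1
  ext r
  constructor
  · rintro ⟨z, hz, rfl⟩
    refine ⟨fun m => -(z m), ?_, ?_⟩
    · rw [Finset.sum_neg_distrib, hz, neg_neg]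
    · exact Finset.sum_congr rfl fun l _ => by rw [coordNorm_neg hN]
  · rintro ⟨z, hz, rfl⟩
    refine ⟨fun m => -(z m), ?_, ?_⟩
    · rw [Finset.sum_neg_distrib, hz]
    · exact Finset.sum_congr rfl fun l _ => by rw [coordNorm_neg hN]

lemma infConv_smul (hN : IsNorm N) (hC0 : 0 < C)
    (hCb : ∀ (x : Fin d → ℝ) (i : Fin d), |x i| ≤ C * N x)
    (hφpos : ∀ l : ℕ, 1 ≤ l → l ≤ d → 0 < φ l) (c : ℝ) (x : Fin d → ℝ) :
    infConv N φ (c • x) = |c| * infConv N φ x := by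
  have key : ∀ (c' : ℝ), 0 < c' → ∀ x' : Fin d → ℝ,
      infConv N φ (c' • x') = c' * infConv N φ x' := by
    intro c' hc' x'
    unfold infConv
    have hset : {r | ∃ z : ℕ → (Fin d → ℝ),
        (∑ m ∈ Finset.Icc 1 d, z m) = c' • x' ∧
        r = ∑ m ∈ Finset.Icc 1 d, φ m * coordNorm N m (z m)}
        = (fun r => c' * r) '' {r | ∃ z : ℕ → (Fin d → ℝ),
        (∑ m ∈ Finset.Icc 1 d, z m) = x' ∧
        r = ∑ m ∈ Finset.Icc 1 d, φ m * coordNorm N m (z m)} := by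
      ext r
      constructor
      · rintro ⟨z, hz, rfl⟩
        refine ⟨∑ m ∈ Finset.Icc 1 d, φ m * coordNorm N m (c'⁻¹ • z m),
          ⟨fun m => c'⁻¹ • z m, ?_, rfl⟩, ?_⟩
        · rw [← Finset.smul_sum, hz, smul_smul, inv_mul_cancel₀ hc'.ne', one_smul]
        · show c' * _ = _
          rw [Finset.mul_sum]
          refine Finset.sum_congr rfl fun l hl => ?_
          rw [Finset.mem_Icc] at hl
          rw [coordNorm_smul hN hC0 hCb hl.1, abs_of_pos (inv_pos.mpr hc')]
          field_simp
      · rintro ⟨s, ⟨z, hz, rfl⟩, rfl⟩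
        refine ⟨fun m => c' • z m, ?_, ?_⟩
        · rw [← Finset.smul_sum, hz]
        · show c' * _ = _
          rw [Finset.mul_sum]
          refine Finset.sum_congr rfl fun l hl => ?_
          rw [Finset.mem_Icc] at hl
          rw [coordNorm_smul hN hC0 hCb hl.1, abs_of_pos hc']
          ring
    rw [hset, csInf_mul_image hc' (infConv_set_nonempty hN x')
      (infConv_bddBelow hN hC0 hCb hφpos x')]
  rcases lt_trichotomy c 0 with hc | hc | hc
  · have : c • x = (-c) • (-x) := by funext i; simp
    rw [this, key (-c) (by linarith) (-x), infConv_neg hN, abs_of_neg hc]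
  · subst hc; simp [infConv_zero hN hC0 hCb hφpos]
  · rw [key c hc x, abs_of_pos hc]

lemma abs_le_infConv (hN : IsNorm N) (hC0 : 0 < C)
    (hCb : ∀ (x : Fin d → ℝ) (i : Fin d), |x i| ≤ C * N x)
    {mφ : ℝ} (hmφ : 0 < mφ) (hφpos : ∀ l : ℕ, 1 ≤ l → l ≤ d → 0 < φ l)
    (hφmin : ∀ l ∈ Finset.Icc 1 d, mφ ≤ φ l)
    (x : Fin d → ℝ) (i : Fin d) : (mφ / C) * |x i| ≤ infConv N φ x := by
  refine le_csInf (infConv_set_nonempty hN x) ?_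
  rintro r ⟨z, hz, rfl⟩
  have h1 : |x i| ≤ ∑ l ∈ Finset.Icc 1 d, |z l i| := by
    rw [← hz]
    calc |(∑ l ∈ Finset.Icc 1 d, z l) i| = |∑ l ∈ Finset.Icc 1 d, z l i| := by
          rw [Finset.sum_apply]
      _ ≤ ∑ l ∈ Finset.Icc 1 d, |z l i| := Finset.abs_sum_le_sum_abs _ _
  have h2 : ∀ l ∈ Finset.Icc 1 d, (mφ / C) * |z l i| ≤ φ l * coordNorm N l (z l) := by
    intro l hl
    rw [Finset.mem_Icc] at hl
    have := abs_le_coordNorm hN hC0 hCb hl.1 (z l) i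
    calc (mφ / C) * |z l i| ≤ (mφ / C) * (C * coordNorm N l (z l)) :=
          mul_le_mul_of_nonneg_left this (by positivity)
      _ = mφ * coordNorm N l (z l) := by field_simp
      _ ≤ φ l * coordNorm N l (z l) :=
          mul_le_mul_of_nonneg_right (hφmin l (Finset.mem_Icc.mpr hl))
            (coordNorm_nonneg hN hC0 hCb hl.1 _)
  calc (mφ / C) * |x i| ≤ (mφ / C) * ∑ l ∈ Finset.Icc 1 d, |z l i| :=
        mul_le_mul_of_nonneg_left h1 (by positivity)
    _ = ∑ l ∈ Finset.Icc 1 d, (mφ / C) * |z l i| := Finset.mul_sum _ _ _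
    _ ≤ ∑ l ∈ Finset.Icc 1 d, φ l * coordNorm N l (z l) := Finset.sum_le_sum h2

end Aux4

section Aux5
variable {d : ℕ} {N : (Fin d → ℝ) → ℝ} {C : ℝ} {φ : ℕ → ℝ}

lemma dotp_sum_left {ι : Type*} (s : Finset ι) (f : ι → Fin d → ℝ) (y : Fin d → ℝ) :
    dotp (∑ i ∈ s, f i) y = ∑ i ∈ s, dotp (f i) y := by
  unfold dotp
  have h : ∀ j, (∑ i ∈ s, f i) j * y j = ∑ i ∈ s, f i j * y j := fun j => by
    rw [Finset.sum_apply, Finset.sum_mul]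
  simp_rw [h]
  exact Finset.sum_comm

lemma dualNorm_set_nonempty (hN : IsNorm N) (hC0 : 0 < C)
    (hCb : ∀ (x : Fin d → ℝ) (i : Fin d), |x i| ≤ C * N x)
    (hφpos : ∀ l : ℕ, 1 ≤ l → l ≤ d → 0 < φ l) (y : Fin d → ℝ) :
    {r | ∃ x : Fin d → ℝ, infConv N φ x ≤ 1 ∧ r = dotp x y}.Nonempty :=
  ⟨0, 0, by rw [infConv_zero hN hC0 hCb hφpos]; exact zero_le_one, (dotp_zero_left y).symm⟩

lemma dualNorm_set_bddAbove (hN : IsNorm N) (hC0 : 0 < C)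
    (hCb : ∀ (x : Fin d → ℝ) (i : Fin d), |x i| ≤ C * N x)
    (hφpos : ∀ l : ℕ, 1 ≤ l → l ≤ d → 0 < φ l) {mφ : ℝ} (hmφ : 0 < mφ)
    (hφmin : ∀ l ∈ Finset.Icc 1 d, mφ ≤ φ l) (y : Fin d → ℝ) :
    BddAbove {r | ∃ x : Fin d → ℝ, infConv N φ x ≤ 1 ∧ r = dotp x y} := by
  refine ⟨(C / mφ) * ∑ i, |y i|, ?_⟩
  rintro r ⟨x, hx1, rfl⟩
  have hxi : ∀ i, |x i| ≤ C / mφ := by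
    intro i
    have h := abs_le_infConv hN hC0 hCb hmφ hφpos hφmin x i
    have h1 : (mφ / C) * |x i| ≤ 1 := h.trans hx1
    rw [div_mul_eq_mul_div, div_le_one hC0] at h1
    rw [le_div_iff₀ hmφ, mul_comm]
    exact h1
  calc dotp x y ≤ ∑ i, |x i * y i| := Finset.sum_le_sum fun i _ => le_abs_self _
    _ ≤ ∑ i, (C / mφ) * |y i| := by
        refine Finset.sum_le_sum fun i _ => ?_
        rw [abs_mul]
        exact mul_le_mul_of_nonneg_right (hxi i) (abs_nonneg _)
    _ = (C / mφ) * ∑ i, |y i| := by rw [Finset.mul_sum]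

lemma Tset_eq_image (y : Fin d → ℝ) :
    {r | ∃ l : ℕ, 1 ≤ l ∧ l ≤ d ∧ r = dualCoord N l y / φ l}
      = (fun l => dualCoord N l y / φ l) '' (Set.Icc 1 d) := by
  ext r
  constructor
  · rintro ⟨l, h1, h2, rfl⟩; exact ⟨l, ⟨h1, h2⟩, rfl⟩
  · rintro ⟨l, ⟨h1, h2⟩, rfl⟩; exact ⟨l, h1, h2, rfl⟩

lemma Tset_bddAbove (y : Fin d → ℝ) :
    BddAbove {r | ∃ l : ℕ, 1 ≤ l ∧ l ≤ d ∧ r = dualCoord N l y / φ l} := by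
  rw [Tset_eq_image]
  exact ((Set.finite_Icc 1 d).image _).bddAbove

/-- The dual norm of the inf-convolution, for `1 ≤ d`. -/
lemma dualNorm_infConv (hN : IsNorm N) (hC0 : 0 < C)
    (hCb : ∀ (x : Fin d → ℝ) (i : Fin d), |x i| ≤ C * N x) (hd1 : 1 ≤ d)
    (hφpos : ∀ l : ℕ, 1 ≤ l → l ≤ d → 0 < φ l) {mφ : ℝ} (hmφ : 0 < mφ)
    (hφmin : ∀ l ∈ Finset.Icc 1 d, mφ ≤ φ l) (y : Fin d → ℝ) :
    dualNorm (infConv N φ) y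
      = sSup {r | ∃ l : ℕ, 1 ≤ l ∧ l ≤ d ∧ r = dualCoord N l y / φ l} := by
  have Tbdd := Tset_bddAbove (N := N) (φ := φ) y
  have Tne : {r | ∃ l : ℕ, 1 ≤ l ∧ l ≤ d ∧ r = dualCoord N l y / φ l}.Nonempty :=
    ⟨dualCoord N 1 y / φ 1, 1, le_rfl, hd1, rfl⟩
  set RT := sSup {r | ∃ l : ℕ, 1 ≤ l ∧ l ≤ d ∧ r = dualCoord N l y / φ l} with hRT
  have hRT0 : 0 ≤ RT := by
    have hm : dualCoord N 1 y / φ 1 ∈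
        {r | ∃ l : ℕ, 1 ≤ l ∧ l ≤ d ∧ r = dualCoord N l y / φ l} := ⟨1, le_rfl, hd1, rfl⟩
    have : 0 ≤ dualCoord N 1 y / φ 1 :=
      div_nonneg (dualCoord_nonneg hN hC0 hCb 1 y) (hφpos 1 le_rfl hd1).le
    exact this.trans (le_csSup Tbdd hm)
  apply le_antisymm
  · -- dualNorm ≤ RT
    refine csSup_le (dualNorm_set_nonempty hN hC0 hCb hφpos y) ?_
    rintro r ⟨x, hx1, rfl⟩
    refine le_of_forall_pos_le_add fun ε hε => ?_
    set ε' := ε / (RT + 1) with hε'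
    have hε'0 : 0 < ε' := by positivity
    obtain ⟨r', hr', hlt⟩ := exists_lt_of_csInf_lt (infConv_set_nonempty hN x)
      (show infConv N φ x < infConv N φ x + ε' by linarith)
    obtain ⟨z, hz, rfl⟩ := hr'
    have hcost : ∑ l ∈ Finset.Icc 1 d, φ l * coordNorm N l (z l) < 1 + ε' := by
      calc _ < infConv N φ x + ε' := hlt
        _ ≤ 1 + ε' := by linarith
    have hsplit : dotp x y = ∑ l ∈ Finset.Icc 1 d, dotp (z l) y := by
      rw [← hz, dotp_sum_left]
    have hterm : ∀ l ∈ Finset.Icc 1 d,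
        dotp (z l) y ≤ (φ l * coordNorm N l (z l)) * RT := by
      intro l hl
      rw [Finset.mem_Icc] at hl
      have hCS := dotp_le_coordNorm_mul hN hC0 hCb hl.1 (z l) y
      have hmemT : dualCoord N l y / φ l ∈
          {r | ∃ l' : ℕ, 1 ≤ l' ∧ l' ≤ d ∧ r = dualCoord N l' y / φ l'} :=
        ⟨l, hl.1, hl.2, rfl⟩
      have hdleRT : dualCoord N l y / φ l ≤ RT := le_csSup Tbdd hmemT
      have hφl := hφpos l hl.1 hl.2
      have heq : coordNorm N l (z l) * dualCoord N l y
          = (φ l * coordNorm N l (z l)) * (dualCoord N l y / φ l) := by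
        field_simp
      calc dotp (z l) y ≤ coordNorm N l (z l) * dualCoord N l y := hCS
        _ = (φ l * coordNorm N l (z l)) * (dualCoord N l y / φ l) := heq
        _ ≤ (φ l * coordNorm N l (z l)) * RT := by
            refine mul_le_mul_of_nonneg_left hdleRT ?_
            exact mul_nonneg hφl.le (coordNorm_nonneg hN hC0 hCb hl.1 _)
    have h1 : dotp x y ≤ (∑ l ∈ Finset.Icc 1 d, φ l * coordNorm N l (z l)) * RT := by
      rw [hsplit, Finset.sum_mul]
      exact Finset.sum_le_sum hterm
    have h2 : (∑ l ∈ Finset.Icc 1 d, φ l * coordNorm N l (z l)) * RT ≤ (1 + ε') * RT :=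
      mul_le_mul_of_nonneg_right hcost.le hRT0
    have h3 : (1 + ε') * RT ≤ RT + ε := by
      have : ε' * RT ≤ ε' * (RT + 1) := mul_le_mul_of_nonneg_left (by linarith) hε'0.le
      have h4 : ε' * (RT + 1) = ε := by rw [hε']; field_simp
      nlinarith
    linarith
  · -- RT ≤ dualNorm
    refine csSup_le Tne ?_
    rintro r ⟨l, hl1, hld, rfl⟩
    have hφl := hφpos l hl1 hld
    have hkey : dualCoord N l y ≤ φ l * dualNorm (infConv N φ) y := by
      refine dualCoord_le hN fun K hK => ?_
      refine restStar_le hN fun x hx hx1 => ?_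
      rw [dotp_projK hx]
      set x' := (φ l)⁻¹ • x with hx'
      have hicx' : infConv N φ x' ≤ 1 := by
        have h1 : infConv N φ x' ≤ φ l * coordNorm N l x' :=
          infConv_le_single hN hC0 hCb hφpos hl1 hld x'
        have h2 : coordNorm N l x' = (φ l)⁻¹ * coordNorm N l x := by
          rw [hx', coordNorm_smul hN hC0 hCb hl1, abs_of_pos (inv_pos.mpr hφl)]
        have h3 : coordNorm N l x ≤ N x := coordNorm_le_N hN hC0 hCb hK hx
        calc infConv N φ x' ≤ φ l * ((φ l)⁻¹ * coordNorm N l x) := by rw [← h2]; exact h1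
          _ = coordNorm N l x := by field_simp
          _ ≤ N x := h3
          _ ≤ 1 := hx1
      have hmem : dotp x' y ∈ {r | ∃ x : Fin d → ℝ, infConv N φ x ≤ 1 ∧ r = dotp x y} :=
        ⟨x', hicx', rfl⟩
      have h5 : dotp x' y ≤ dualNorm (infConv N φ) y :=
        le_csSup (dualNorm_set_bddAbove hN hC0 hCb hφpos hmφ hφmin y) hmem
      rw [hx', dotp_smul_left] at h5
      calc dotp x y = φ l * ((φ l)⁻¹ * dotp x y) := by field_simp
        _ ≤ φ l * dualNorm (infConv N φ) y := mul_le_mul_of_nonneg_left h5 hφl.le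
    rw [div_le_iff₀ hφl, mul_comm]
    exact hkey

end Aux5

theorem statement19 {d : ℕ} (N : (Fin d → ℝ) → ℝ) (hN : IsNorm N) (φ : ℕ → ℝ)
    (hφ0 : φ 0 = 0) (hφpos : ∀ l : ℕ, 1 ≤ l → l ≤ d → 0 < φ l) :
    IsNorm (infConv N φ) ∧
      (∀ y : Fin d → ℝ,
        dualNorm (infConv N φ) y
          = sSup {r | ∃ l : ℕ, 1 ≤ l ∧ l ≤ d ∧ r = dualCoord N l y / φ l}) ∧
      ({y : Fin d → ℝ | dualNorm (infConv N φ) y ≤ 1}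
          = ⋂ l ∈ Finset.Icc 1 d, {y : Fin d → ℝ | dualCoord N l y ≤ φ l}) ∧
      ∀ x : Fin d → ℝ, x ≠ 0 → infConv N φ x / N x ≤ φ (ell0 x) := by
  classical
  obtain ⟨C, hC0, hCb⟩ := hN.coord_bound
  rcases Nat.eq_zero_or_pos d with hd0 | hd1
  · -- degenerate case d = 0
    subst hd0
    have hx0 : ∀ x : Fin 0 → ℝ, x = 0 := fun x => funext fun i => i.elim0
    have hic : ∀ x : Fin 0 → ℝ, infConv N φ x = 0 := fun x => by
      rw [hx0 x]; exact infConv_zero hN hC0 hCb hφpos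
    have hdot0 : ∀ x y : Fin 0 → ℝ, dotp x y = 0 := fun x y => by simp [dotp]
    have hdual : ∀ y : Fin 0 → ℝ, dualNorm (infConv N φ) y = 0 := fun y => by
      unfold dualNorm
      have : {r | ∃ x : Fin 0 → ℝ, infConv N φ x ≤ 1 ∧ r = dotp x y} = {0} := by
        ext r
        constructor
        · rintro ⟨x, _, rfl⟩; simp [hdot0]
        · rintro rfl
          exact ⟨0, by rw [hic]; exact zero_le_one, (hdot0 0 y).symm⟩
      rw [this, csSup_singleton]
    refine ⟨⟨fun x => ?_, fun c x => ?_, fun x y => ?_⟩, fun y => ?_, ?_, fun x hx => ?_⟩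
    · exact ⟨fun _ => hx0 x, fun _ => hic x⟩
    · rw [hic, hic]; ring
    · rw [hic, hic, hic]; norm_num
    · rw [hdual]
      have : {r | ∃ l : ℕ, 1 ≤ l ∧ l ≤ 0 ∧ r = dualCoord N l y / φ l} = (∅ : Set ℝ) := by
        ext r
        simp only [Set.mem_setOf_eq, Set.mem_empty_iff_false, iff_false]
        rintro ⟨l, h1, h2, _⟩; omega
      rw [this, Real.sSup_empty]
    · ext y
      simp [hdual y, Finset.Icc_eq_empty_of_lt (by norm_num : (1:ℕ) > 0)]
    · exact absurd (hx0 x) hx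
  · -- main case 1 ≤ d
    obtain ⟨l₀, hl₀mem, hl₀min⟩ :=
      Finset.exists_min_image (Finset.Icc 1 d) φ ⟨1, Finset.mem_Icc.mpr ⟨le_rfl, hd1⟩⟩
    set mφ := φ l₀ with hmφdef
    have hl₀ := Finset.mem_Icc.mp hl₀mem
    have hmφ : 0 < mφ := hφpos l₀ hl₀.1 hl₀.2
    have hφmin : ∀ l ∈ Finset.Icc 1 d, mφ ≤ φ l := hl₀min
    have hisnorm : IsNorm (infConv N φ) := by
      refine ⟨fun x => ?_, fun c x => infConv_smul hN hC0 hCb hφpos c x,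
        fun x y => infConv_triangle hN hC0 hCb hφpos x y⟩
      constructor
      · intro h
        by_contra hx
        obtain ⟨i, hi⟩ := Function.ne_iff.mp hx
        have h1 := abs_le_infConv hN hC0 hCb hmφ hφpos hφmin x i
        rw [h] at h1
        have h2 : 0 < (mφ / C) * |x i| := by
          have : x i ≠ 0 := hi
          positivity
        linarith
      · rintro rfl
        exact infConv_zero hN hC0 hCb hφpos
    have hdual := fun y => dualNorm_infConv hN hC0 hCb hd1 hφpos hmφ hφmin y
    refine ⟨hisnorm, hdual, ?_, ?_⟩
    · -- unit ball
      ext y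
      simp only [Set.mem_setOf_eq, Set.mem_iInter]
      rw [hdual y]
      have Tbdd := Tset_bddAbove (N := N) (φ := φ) y
      have Tne : {r | ∃ l : ℕ, 1 ≤ l ∧ l ≤ d ∧ r = dualCoord N l y / φ l}.Nonempty :=
        ⟨dualCoord N 1 y / φ 1, 1, le_rfl, hd1, rfl⟩
      rw [csSup_le_iff Tbdd Tne]
      constructor
      · intro h l hl
        rw [Finset.mem_Icc] at hl
        have := h (dualCoord N l y / φ l) ⟨l, hl.1, hl.2, rfl⟩
        rwa [div_le_one (hφpos l hl.1 hl.2)] at this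
      · rintro h r ⟨l, h1, h2, rfl⟩
        rw [div_le_one (hφpos l h1 h2)]
        exact h l (Finset.mem_Icc.mpr ⟨h1, h2⟩)
    · -- ratio bound
      intro x hx
      have hsupp : (Function.support x).Finite := Set.toFinite _
      set K := hsupp.toFinset with hK
      have hxK : x ∈ RK K := by
        intro j hj
        rw [hK, Set.Finite.mem_toFinset] at hj
        exact Function.notMem_support.mp hj
      have hcard : K.card = ell0 x := by
        rw [hK, ell0, Set.ncard_eq_toFinset_card']
        congr 1
        ext i
        simp [Set.Finite.mem_toFinset]
      have hk1 : 1 ≤ ell0 x := by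
        have hne : (Function.support x).Nonempty := by
          rcases Function.ne_iff.mp hx with ⟨i, hi⟩
          exact ⟨i, hi⟩
        exact (Set.ncard_pos hsupp).mpr hne
      have hkd : ell0 x ≤ d := by
        have h1 : (Function.support x).ncard ≤ (Set.univ : Set (Fin d)).ncard :=
          Set.ncard_le_ncard (Set.subset_univ _) Set.finite_univ
        rwa [Set.ncard_univ, Nat.card_eq_fintype_card, Fintype.card_fin] at h1
      have hNx : 0 < N x := hN.pos hx
      rw [div_le_iff₀ hNx]
      calc infConv N φ x ≤ φ (ell0 x) * coordNorm N (ell0 x) x :=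
            infConv_le_single hN hC0 hCb hφpos hk1 hkd x
        _ ≤ φ (ell0 x) * N x := by
            refine mul_le_mul_of_nonneg_left ?_ (hφpos _ hk1 hkd).le
            exact coordNorm_le_N hN hC0 hCb (le_of_eq hcard) hxK
end
end
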